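/- arXiv:1911.10993 — 11 statements merged into one kernel-verified Lean document; each statement's English description precedes it below -/
import Mathlib

section
/- Let (K, d) be a compact metric space, let γ = (γ₁, …, γₙ) be a system of proper contractions on K, and let p₁, …, pₙ be real numbers with pᵢ > 0 for every i and Σ_{i=1}^n pᵢ = 1. Then there exists a unique Borel probability measure μ on K such that μ(E) = Σ_{i=1}^n pᵢ · μ(γᵢ⁻¹(E)) for every Borel set E ⊆ K. -/
open MeasureTheory Set

/-- A continuous map `g : K → K` on a metric space is a *proper contraction* if there are
constants `0 < c₁ ≤ c₂ < 1` with `c₁ d(x,y) ≤ d(g x, g y) ≤ c₂ d(x,y)` for all `x, y`. -/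
def ProperContraction {K : Type*} [MetricSpace K] (g : K → K) : Prop :=
  ∃ c₁ c₂ : ℝ, 0 < c₁ ∧ c₁ ≤ c₂ ∧ c₂ < 1 ∧
    ∀ x y : K, c₁ * dist x y ≤ dist (g x) (g y) ∧ dist (g x) (g y) ≤ c₂ * dist x y

/-- `μ` is a self-similar (Borel probability) measure for the system `γ` with weights `p`. -/
def IsSelfSimilarMeasure {K : Type*} [MetricSpace K] [MeasurableSpace K] {n : ℕ}
    (γ : Fin n → K → K) (p : Fin n → ℝ) (μ : Measure K) : Prop :=
  IsProbabilityMeasure μ ∧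
    ∀ E : Set K, MeasurableSet E → μ E = ∑ i, ENNReal.ofReal (p i) * μ (γ i ⁻¹' E)

/-- Auxiliary iteration: given a digit map `D`, a shift `σ`, branch maps `γ'` and a base
point `x₀`, `hutchinsonIterSeq γ' D σ x₀ k t` applies the first `k` digit branches of `t`
to `x₀`. -/
def hutchinsonIterSeq {K : Type*} (γ' : ℕ → K → K) (D : ℝ → ℕ) (σ : ℝ → ℝ) (x₀ : K) :
    ℕ → ℝ → K
  | 0, _ => x₀
  | (k + 1), t => γ' (D t) (hutchinsonIterSeq γ' D σ x₀ k (σ t))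

/-- Hutchinson's theorem: given a system of proper contractions on a (nonempty) compact metric
space and weights `p` with `pᵢ > 0` and `∑ pᵢ = 1`, there is a unique Borel probability measure
`μ` with `μ(E) = ∑ pᵢ μ(γᵢ⁻¹ E)` for all Borel sets `E`. -/
theorem hutchinson_existence_uniqueness {K : Type*} [MetricSpace K] [CompactSpace K] [Nonempty K]
    [MeasurableSpace K] [BorelSpace K] {n : ℕ} (hn : 1 ≤ n)
    (γ : Fin n → K → K) (hγ : ∀ i, ProperContraction (γ i))
    (p : Fin n → ℝ) (hp : ∀ i, 0 < p i) (hsum : ∑ i, p i = 1) :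
    ∃! μ : Measure K, IsSelfSimilarMeasure γ p μ := by
  classical
  obtain ⟨x₀⟩ := (inferInstance : Nonempty K)
  choose c₁ c₂ hc₁pos hc₁₂ hc₂lt hdist using hγ
  have hne : (Finset.univ : Finset (Fin n)).Nonempty := ⟨⟨0, hn⟩, Finset.mem_univ _⟩
  set c : ℝ := Finset.univ.sup' hne c₂ with hcdef
  have hcmem : ∀ i, c₂ i ≤ c := fun i => Finset.le_sup' _ (Finset.mem_univ i)
  have hc1 : c < 1 := (Finset.sup'_lt_iff hne).mpr fun i _ => hc₂lt i
  have hc0 : 0 < c :=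
    lt_of_lt_of_le (hc₁pos ⟨0, hn⟩) ((hc₁₂ ⟨0, hn⟩).trans (hcmem ⟨0, hn⟩))
  have hγc : ∀ i (x y : K), dist (γ i x) (γ i y) ≤ c * dist x y := by
    intro i x y
    exact (hdist i x y).2.trans (mul_le_mul_of_nonneg_right (hcmem i) dist_nonneg)
  have hγcont : ∀ i, Continuous (γ i) := by
    intro i
    refine LipschitzWith.continuous (K := Real.toNNReal c) ?_
    refine LipschitzWith.of_dist_le_mul fun x y => ?_
    rw [Real.coe_toNNReal _ hc0.le]
    exact hγc i x y
  have hγmeas : ∀ i, Measurable (γ i) := fun i => (hγcont i).measurable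
  set D₀ : ℝ := Metric.diam (Set.univ : Set K) with hD₀def
  have hD : ∀ x y : K, dist x y ≤ D₀ := fun x y =>
    Metric.dist_le_diam_of_mem isCompact_univ.isBounded (mem_univ x) (mem_univ y)
  -- integrability of continuous functions w.r.t. finite measures on the compact space `K`
  have hint : ∀ (m : Measure K) [IsFiniteMeasure m] (g : K → ℝ), Continuous g →
      Integrable g m := by
    intro m _ g hg
    exact hg.integrable_of_hasCompactSupport ((isClosed_tsupport g).isCompact)
  -- the dual operator
  set S : (K → ℝ) → K → ℝ := fun g x => ∑ i, p i * g (γ i x) with hSdef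
  have hScont : ∀ g : K → ℝ, Continuous g → Continuous (S g) := by
    intro g hg
    exact continuous_finset_sum _ fun i _ => continuous_const.mul (hg.comp (hγcont i))
  have hSiter : ∀ (k : ℕ) (g : K → ℝ), Continuous g → Continuous (S^[k] g) := by
    intro k
    induction k with
    | zero => intro g hg; simpa using hg
    | succ k ih =>
      intro g hg
      rw [Function.iterate_succ_apply']
      exact hScont _ (ih g hg)
  -- invariance of integrals for self-similar measures
  have hinv : ∀ (μ : Measure K), IsSelfSimilarMeasure γ p μ → ∀ f : K → ℝ, Continuous f →
      ∫ x, f x ∂μ = ∫ x, S f x ∂μ := by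
    intro μ hμ f hf
    haveI : IsProbabilityMeasure μ := hμ.1
    have hI : ∀ i ∈ (Finset.univ : Finset (Fin n)),
        Integrable (fun x => p i * f (γ i x)) μ := fun i _ =>
      (hint μ (fun x => f (γ i x)) (hf.comp (hγcont i))).const_mul (p i)
    have hdec : μ = ∑ i, ENNReal.ofReal (p i) • μ.map (γ i) := by
      ext E hE
      rw [hμ.2 E hE, Measure.finset_sum_apply]
      exact Finset.sum_congr rfl fun i _ => by
        rw [Measure.smul_apply, Measure.map_apply (hγmeas i) hE, smul_eq_mul]
    have hfin : ∀ i : Fin n, IsFiniteMeasure (ENNReal.ofReal (p i) • μ.map (γ i)) := by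
      intro i
      refine ⟨?_⟩
      rw [Measure.smul_apply, Measure.map_apply (hγmeas i) MeasurableSet.univ, smul_eq_mul]
      exact ENNReal.mul_lt_top ENNReal.ofReal_lt_top (measure_lt_top μ _)
    calc ∫ x, f x ∂μ = ∫ x, f x ∂(∑ i, ENNReal.ofReal (p i) • μ.map (γ i)) := by rw [← hdec]
      _ = ∑ i, ∫ x, f x ∂(ENNReal.ofReal (p i) • μ.map (γ i)) := by
          refine integral_finset_sum_measure fun i _ => ?_
          haveI := hfin i
          exact hint _ f hf
      _ = ∑ i, p i * ∫ x, f (γ i x) ∂μ := by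
          refine Finset.sum_congr rfl fun i _ => ?_
          rw [integral_smul_measure, ENNReal.toReal_ofReal (hp i).le,
            integral_map (hγmeas i).aemeasurable hf.aestronglyMeasurable, smul_eq_mul]
      _ = ∫ x, S f x ∂μ := by
          simp only [hSdef]
          rw [integral_finset_sum _ hI]
          exact Finset.sum_congr rfl fun i _ => (integral_const_mul _ _).symm
  have hinviter : ∀ (μ : Measure K), IsSelfSimilarMeasure γ p μ → ∀ f : K → ℝ, Continuous f →
      ∀ k, ∫ x, f x ∂μ = ∫ x, S^[k] f x ∂μ := by
    intro μ hμ f hf k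
    induction k with
    | zero => simp
    | succ k ih =>
      rw [ih, Function.iterate_succ_apply']
      exact hinv μ hμ _ (hSiter k f hf)
  -- oscillation decay
  have hosc : ∀ f : K → ℝ, Continuous f → ∀ ε : ℝ, 0 < ε →
      ∃ k, ∀ x y : K, |S^[k] f x - S^[k] f y| ≤ ε := by
    intro f hf ε hε
    obtain ⟨δ, hδ, hδ'⟩ := Metric.uniformContinuous_iff.mp
      (CompactSpace.uniformContinuous_of_continuous hf) ε hε
    have claim : ∀ k (x y : K), c ^ k * dist x y < δ → |S^[k] f x - S^[k] f y| ≤ ε := by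
      intro k
      induction k with
      | zero =>
        intro x y h
        simp only [pow_zero, one_mul] at h
        simpa [Real.dist_eq] using (hδ' h).le
      | succ k ih =>
        intro x y h
        rw [Function.iterate_succ_apply']
        have hexp : S (S^[k] f) x - S (S^[k] f) y
            = ∑ i, p i * (S^[k] f (γ i x) - S^[k] f (γ i y)) := by
          simp only [hSdef, mul_sub, Finset.sum_sub_distrib]
        rw [hexp]
        refine (Finset.abs_sum_le_sum_abs _ _).trans ?_
        have hterm : ∀ i ∈ (Finset.univ : Finset (Fin n)),
            |p i * (S^[k] f (γ i x) - S^[k] f (γ i y))| ≤ p i * ε := by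
          intro i _
          rw [abs_mul, abs_of_pos (hp i)]
          refine mul_le_mul_of_nonneg_left (ih (γ i x) (γ i y) ?_) (hp i).le
          calc c ^ k * dist (γ i x) (γ i y) ≤ c ^ k * (c * dist x y) :=
                mul_le_mul_of_nonneg_left (hγc i x y) (pow_nonneg hc0.le k)
            _ = c ^ (k + 1) * dist x y := by ring
            _ < δ := h
        refine (Finset.sum_le_sum hterm).trans ?_
        rw [← Finset.sum_mul, hsum, one_mul]
    have htend : Filter.Tendsto (fun k : ℕ => c ^ k * D₀) Filter.atTop (nhds (0 * D₀)) :=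
      (tendsto_pow_atTop_nhds_zero_of_lt_one hc0.le hc1).mul_const D₀
    rw [zero_mul] at htend
    obtain ⟨k, hk⟩ := (htend.eventually (gt_mem_nhds hδ)).exists
    refine ⟨k, fun x y => claim k x y ?_⟩
    calc c ^ k * dist x y ≤ c ^ k * D₀ :=
          mul_le_mul_of_nonneg_left (hD x y) (pow_nonneg hc0.le k)
      _ < δ := hk
  -- uniqueness
  have huniq : ∀ μ μ' : Measure K, IsSelfSimilarMeasure γ p μ → IsSelfSimilarMeasure γ p μ' →
      μ = μ' := by
    intro μ μ' hμ hμ'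
    haveI := hμ.1
    haveI := hμ'.1
    have hintegral : ∀ f : K → ℝ, Continuous f → ∫ x, f x ∂μ = ∫ x, f x ∂μ' := by
      intro f hf
      by_contra hne'
      have hΔ : 0 < |∫ x, f x ∂μ - ∫ x, f x ∂μ'| := abs_pos.mpr (sub_ne_zero.mpr hne')
      obtain ⟨k, hk⟩ := hosc f hf (|∫ x, f x ∂μ - ∫ x, f x ∂μ'| / 4) (by positivity)
      set g := S^[k] f with hgdef
      have hgc : Continuous g := hSiter k f hf
      have h1 : ∀ (m : Measure K), IsProbabilityMeasure m →
          |∫ x, g x ∂m - g x₀| ≤ |∫ x, f x ∂μ - ∫ x, f x ∂μ'| / 4 := by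
        intro m hm
        have heq : ∫ x, g x ∂m - g x₀ = ∫ x, (g x - g x₀) ∂m := by
          rw [integral_sub (hint m g hgc) (integrable_const _), integral_const,
            probReal_univ, one_smul]
        rw [heq]
        have hb := norm_integral_le_of_norm_le_const
          (μ := m) (C := |∫ x, f x ∂μ - ∫ x, f x ∂μ'| / 4) (f := fun x => g x - g x₀)
          (Filter.Eventually.of_forall fun x => by
            simpa [Real.norm_eq_abs] using hk x x₀)
        simpa [Real.norm_eq_abs, measure_univ] using hb
      have e1 : ∫ x, f x ∂μ = ∫ x, g x ∂μ := hinviter μ hμ f hf k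
      have e2 : ∫ x, f x ∂μ' = ∫ x, g x ∂μ' := hinviter μ' hμ' f hf k
      have h2 := h1 μ hμ.1
      have h3 := h1 μ' hμ'.1
      have : |∫ x, f x ∂μ - ∫ x, f x ∂μ'|
          ≤ |∫ x, g x ∂μ - g x₀| + |∫ x, g x ∂μ' - g x₀| := by
        rw [e1, e2]
        calc |∫ x, g x ∂μ - ∫ x, g x ∂μ'|
            = |(∫ x, g x ∂μ - g x₀) - (∫ x, g x ∂μ' - g x₀)| := by ring_nf
          _ ≤ |∫ x, g x ∂μ - g x₀| + |∫ x, g x ∂μ' - g x₀| := abs_sub _ _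
      linarith
    refine ext_of_forall_lintegral_eq_of_IsFiniteMeasure fun f => ?_
    have hfc : Continuous fun x => (f x : ℝ) := NNReal.continuous_coe.comp f.continuous
    rw [lintegral_coe_eq_integral _ (hint μ _ hfc), lintegral_coe_eq_integral _ (hint μ' _ hfc),
      hintegral _ hfc]
  -- existence
  have hexist : ∃ μ : Measure K, IsSelfSimilarMeasure γ p μ := by
    -- digit data for the weights `p`
    set q : ℕ → ℝ := fun j => if h : j < n then p ⟨j, h⟩ else 0 with hqdef
    have hq0 : ∀ j, 0 ≤ q j := by
      intro j
      simp only [hqdef]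
      split_ifs with h
      · exact (hp _).le
      · exact le_refl 0
    have hqpos : ∀ j, j < n → 0 < q j := by
      intro j h
      simp only [hqdef, dif_pos h]
      exact hp _
    set a : ℕ → ℝ := fun m => ∑ j ∈ Finset.range m, q j with hadef
    have ha0 : a 0 = 0 := Finset.sum_range_zero q
    have hastep : ∀ m, a (m + 1) = a m + q m := fun m => Finset.sum_range_succ q m
    have hamono : Monotone a := monotone_nat_of_le_succ fun m => by
      rw [hastep]; linarith [hq0 m]
    have han : a n = 1 := by
      rw [← hsum]
      simp only [hadef]
      rw [← Fin.sum_univ_eq_sum_range q n]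
      exact Finset.sum_congr rfl fun i _ => by simp [hqdef, i.isLt]
    -- the digit map and the shift
    set D : ℝ → ℕ := fun t => Nat.findGreatest (fun m => a m ≤ t) (n - 1) with hDdef
    have hDlt : ∀ t, D t < n := fun t => lt_of_le_of_lt (Nat.findGreatest_le _) (by omega)
    have hDle : ∀ t, 0 ≤ t → a (D t) ≤ t := by
      intro t ht
      exact Nat.findGreatest_spec (P := fun m => a m ≤ t) (m := 0) (Nat.zero_le _)
        (show a 0 ≤ t by rw [ha0]; exact ht)
    have hDeq : ∀ (t : ℝ) (m : ℕ), 0 ≤ t → m < n → a m ≤ t → t < a (m + 1) → D t = m := by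
      intro t m ht hm h1 h2
      refine le_antisymm ?_ (Nat.le_findGreatest (P := fun m => a m ≤ t) (by omega) h1)
      by_contra hcon
      push_neg at hcon
      have h3 : a (D t) ≤ t := hDle t ht
      have h4 : a (m + 1) ≤ a (D t) := hamono hcon
      linarith
    have hDmono : Monotone D := by
      intro s t hst
      exact Nat.findGreatest_mono (P := fun m => a m ≤ s) (Q := fun m => a m ≤ t)
        (fun m hm => hm.trans hst) le_rfl
    set σ : ℝ → ℝ := fun t => (t - a (D t)) / q (D t) with hσdef
    have hDmeas : Measurable D := by
      refine measurable_to_countable' fun m => ?_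
      have hoc : OrdConnected (D ⁻¹' {m}) := by
        refine ⟨fun x hx y hy z hz => ?_⟩
        simp only [mem_preimage, mem_singleton_iff] at hx hy ⊢
        have h1 := hDmono hz.1
        have h2 := hDmono hz.2
        omega
      exact hoc.measurableSet
    have hσmeas : Measurable σ := by
      have h1 : Measurable fun t : ℝ => ((t, D t) : ℝ × ℕ) := measurable_id.prodMk hDmeas
      have h2 : Measurable fun r : ℝ × ℕ => (r.1 - a r.2) / q r.2 := by
        refine measurable_from_prod_countable_left fun m => ?_
        exact (measurable_id.sub_const (a m)).div_const (q m)
      exact h2.comp h1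
    -- branch maps indexed by ℕ
    set γ' : ℕ → K → K := fun m => if h : m < n then γ ⟨m, h⟩ else id with hγ'def
    have hγ'cont : ∀ m, Continuous (γ' m) := by
      intro m
      simp only [hγ'def]
      split_ifs with h
      exacts [hγcont _, continuous_id]
    have hγ'c : ∀ m, m < n → ∀ x y : K, dist (γ' m x) (γ' m y) ≤ c * dist x y := by
      intro m hm x y
      simp only [hγ'def, dif_pos hm]
      exact hγc _ x y
    -- the coding iteration and coding map
    set Γ : ℕ → ℝ → K := hutchinsonIterSeq γ' D σ x₀ with hΓdef
    have hΓsucc : ∀ k t, Γ (k + 1) t = γ' (D t) (Γ k (σ t)) := fun k t => rfl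
    have hΓmeas : ∀ k, Measurable (Γ k) := by
      intro k
      induction k with
      | zero => exact measurable_const
      | succ k ih =>
        have h1 : Measurable fun t => ((Γ k (σ t), D t) : K × ℕ) :=
          (ih.comp hσmeas).prodMk hDmeas
        have h2 : Measurable fun r : K × ℕ => γ' r.2 r.1 :=
          measurable_from_prod_countable_left fun m => (hγ'cont m).measurable
        exact h2.comp h1
    have hΓdist : ∀ k t, dist (Γ k t) (Γ (k + 1) t) ≤ D₀ * c ^ k := by
      intro k
      induction k with
      | zero =>
        intro t
        rw [pow_zero, mul_one]
        exact hD _ _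
      | succ k ih =>
        intro t
        rw [hΓsucc, hΓsucc]
        calc dist (γ' (D t) (Γ k (σ t))) (γ' (D t) (Γ (k + 1) (σ t)))
            ≤ c * dist (Γ k (σ t)) (Γ (k + 1) (σ t)) := hγ'c _ (hDlt t) _ _
          _ ≤ c * (D₀ * c ^ k) := mul_le_mul_of_nonneg_left (ih (σ t)) hc0.le
          _ = D₀ * c ^ (k + 1) := by ring
    have hlim : ∀ t, ∃ x : K, Filter.Tendsto (fun k => Γ k t) Filter.atTop (nhds x) := fun t =>
      cauchySeq_tendsto_of_complete (cauchySeq_of_le_geometric c D₀ hc1 fun k => hΓdist k t)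
    set π : ℝ → K := fun t => (hlim t).choose with hπdef
    have hπ : ∀ t, Filter.Tendsto (fun k => Γ k t) Filter.atTop (nhds (π t)) := fun t =>
      (hlim t).choose_spec
    have hπmeas : Measurable π :=
      measurable_of_tendsto_metrizable hΓmeas (tendsto_pi_nhds.mpr hπ)
    -- the key self-similarity identity for `π`
    have hπeq : ∀ (i : Fin n), ∀ t : ℝ, 0 ≤ t → t < 1 →
        π (a i.val + q i.val * t) = γ i (π t) := by
      intro i t ht0 ht1
      have hqi : 0 < q i.val := hqpos _ i.isLt
      have hs0 : (0:ℝ) ≤ a i.val := ha0 ▸ hamono (Nat.zero_le _)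
      have hsmem1 : a i.val ≤ a i.val + q i.val * t := by nlinarith
      have hsmem2 : a i.val + q i.val * t < a (i.val + 1) := by
        rw [hastep]; nlinarith
      have hDs : D (a i.val + q i.val * t) = i.val :=
        hDeq _ _ (le_trans hs0 hsmem1) i.isLt hsmem1 hsmem2
      have hσs : σ (a i.val + q i.val * t) = t := by
        simp only [hσdef, hDs]
        rw [add_sub_cancel_left, mul_div_cancel_left₀ _ hqi.ne']
      have hΓs : ∀ k, Γ (k + 1) (a i.val + q i.val * t) = γ i (Γ k t) := by
        intro k
        rw [hΓsucc, hDs, hσs]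
        simp only [hγ'def, dif_pos i.isLt, Fin.eta]
      have h1 : Filter.Tendsto (fun k => Γ (k + 1) (a i.val + q i.val * t)) Filter.atTop
          (nhds (π (a i.val + q i.val * t))) :=
        (hπ _).comp (Filter.tendsto_add_atTop_nat 1)
      have h2 : Filter.Tendsto (fun k => γ i (Γ k t)) Filter.atTop (nhds (γ i (π t))) :=
        ((hγcont i).tendsto _).comp (hπ t)
      refine tendsto_nhds_unique ?_ h2
      simpa only [hΓs] using h1
    -- the candidate measure
    set ν : Measure ℝ := volume.restrict (Ico 0 1) with hνdef
    have hν : IsProbabilityMeasure ν := ⟨by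
      rw [hνdef, Measure.restrict_apply_univ, Real.volume_Ico]
      simp⟩
    haveI := hν
    refine ⟨ν.map π, Measure.isProbabilityMeasure_map hπmeas.aemeasurable, ?_⟩
    intro E hE
    have hπE : MeasurableSet (π ⁻¹' E) := hπmeas hE
    -- each summand expressed as a piece of Lebesgue measure
    have hterm : ∀ i : Fin n, ENNReal.ofReal (p i) * (ν.map π) (γ i ⁻¹' E)
        = volume (π ⁻¹' E ∩ Ico (a i.val) (a (i.val + 1))) := by
      intro i
      have hqi : 0 < q i.val := hqpos _ i.isLt
      have hgiE : MeasurableSet (γ i ⁻¹' E) := hγmeas i hE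
      rw [Measure.map_apply hπmeas hgiE, hνdef, Measure.restrict_apply (hπmeas hgiE)]
      have hset : π ⁻¹' (γ i ⁻¹' E) ∩ Ico 0 1
          = (fun t : ℝ => a i.val + q i.val * t) ⁻¹'
            (π ⁻¹' E ∩ Ico (a i.val) (a (i.val + 1))) := by
        ext t
        simp only [mem_inter_iff, mem_preimage, mem_Ico]
        constructor
        · rintro ⟨hmem, ht0, ht1⟩
          refine ⟨?_, ?_, ?_⟩
          · rw [hπeq i t ht0 ht1]; exact hmem
          · nlinarith
          · rw [hastep]; nlinarith
        · rintro ⟨hmem, h1, h2⟩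
          rw [hastep] at h2
          have ht0 : (0:ℝ) ≤ t := by nlinarith
          have ht1 : t < 1 := by nlinarith
          refine ⟨?_, ht0, ht1⟩
          rw [← hπeq i t ht0 ht1]
          exact hmem
      rw [hset]
      have hcomp : (fun t : ℝ => a i.val + q i.val * t)
          = (fun t : ℝ => a i.val + t) ∘ (fun t : ℝ => q i.val * t) := rfl
      rw [hcomp, preimage_comp, Real.volume_preimage_mul_left hqi.ne',
        measure_preimage_add volume (a i.val) _]
      have hqp : q i.val = p i := by simp [hqdef, i.isLt]
      rw [abs_of_pos (inv_pos.mpr hqi), ← mul_assoc, hqp, ← ENNReal.ofReal_mul (hp i).le,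
        mul_inv_cancel₀ (hp i).ne', ENNReal.ofReal_one, one_mul]
    -- the intervals partition [0,1)
    have hrange : ∀ m : ℕ, (⋃ j ∈ Finset.range m, Ico (a j) (a (j + 1))) = Ico (a 0) (a m) := by
      intro m
      induction m with
      | zero => simp
      | succ m ih =>
        rw [Finset.range_add_one, Finset.set_biUnion_insert, ih, Set.union_comm,
          Set.Ico_union_Ico_eq_Ico (hamono (Nat.zero_le m)) (by rw [hastep]; linarith [hq0 m])]
    have hunion : (⋃ i : Fin n, Ico (a i.val) (a (i.val + 1))) = Ico (0:ℝ) 1 := by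
      have h1 := hrange n
      rw [ha0, han] at h1
      rw [← h1]
      ext t
      simp only [mem_iUnion, Finset.mem_range, exists_prop]
      constructor
      · rintro ⟨i, hi⟩
        exact ⟨i.val, i.isLt, hi⟩
      · rintro ⟨j, hj, hmem⟩
        exact ⟨⟨j, hj⟩, hmem⟩
    have hdisj : Pairwise (Function.onFun Disjoint fun i : Fin n =>
        π ⁻¹' E ∩ Ico (a i.val) (a (i.val + 1))) := by
      have key : ∀ i j : Fin n, i.val < j.val →
          Disjoint (Ico (a i.val) (a (i.val + 1))) (Ico (a j.val) (a (j.val + 1))) := by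
        intro i j h
        rw [Set.Ico_disjoint_Ico]
        calc min (a (i.val + 1)) (a (j.val + 1)) ≤ a (i.val + 1) := min_le_left _ _
          _ ≤ a j.val := hamono h
          _ ≤ max (a i.val) (a j.val) := le_max_right _ _
      intro i j hij
      rcases lt_or_gt_of_ne (fun h => hij (Fin.val_injective h)) with h | h
      · exact ((key i j h).mono inter_subset_right inter_subset_right)
      · exact ((key j i h).mono inter_subset_right inter_subset_right).symm
    have hmeas' : ∀ i : Fin n, MeasurableSet (π ⁻¹' E ∩ Ico (a i.val) (a (i.val + 1))) :=
      fun i => hπE.inter measurableSet_Ico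
    have hsum2 : ∑ i : Fin n, volume (π ⁻¹' E ∩ Ico (a i.val) (a (i.val + 1)))
        = volume (π ⁻¹' E ∩ Ico 0 1) := by
      calc ∑ i : Fin n, volume (π ⁻¹' E ∩ Ico (a i.val) (a (i.val + 1)))
          = ∑' i : Fin n, volume (π ⁻¹' E ∩ Ico (a i.val) (a (i.val + 1))) :=
            (tsum_fintype _).symm
        _ = volume (⋃ i : Fin n, π ⁻¹' E ∩ Ico (a i.val) (a (i.val + 1))) :=
            (measure_iUnion hdisj hmeas').symm
        _ = volume (π ⁻¹' E ∩ Ico 0 1) := by rw [← inter_iUnion, hunion]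
    rw [Measure.map_apply hπmeas hE, hνdef, Measure.restrict_apply hπE, ← hsum2]
    exact Finset.sum_congr rfl fun i _ => (hterm i).symm
  obtain ⟨μ, hμ⟩ := hexist
  exact ⟨μ, hμ, fun ν hν => huniq ν μ hν hμ⟩
end

section
/- Let (K, d) be a compact metric space and let γ = (γ₁, …, γₙ) be a system of proper contractions on K. Assume that K is self-similar with respect to γ and that γ satisfies the measure separation condition in K. Then for every Borel set E ⊆ K and every i = 1, …, n, the Hutchinson measure satisfies μ^H(γᵢ(E)) = (1/n)·μ^H(E). -/
open MeasureTheory Set Filter Topology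
open scoped ENNReal NNReal

noncomputable section

/-- `K` is self-similar with respect to the system `γ`: `K = ⋃ i, γ i (K)`. -/
def SelfSimilarSet {K : Type*} [MetricSpace K] {n : ℕ} (γ : Fin n → K → K) : Prop :=
  (⋃ i, γ i '' Set.univ) = Set.univ

/-- `μ` is the Hutchinson measure of the system `γ`: the self-similar probability measure
with all weights equal to `1/n`. -/
def IsHutchinsonMeasure {K : Type*} [MetricSpace K] [MeasurableSpace K] {n : ℕ}
    (γ : Fin n → K → K) (μ : Measure K) : Prop :=
  IsProbabilityMeasure μ ∧
    ∀ E : Set K, MeasurableSet E → μ E = (n : ℝ≥0∞)⁻¹ * ∑ i, μ (γ i ⁻¹' E)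

/-- The system `γ` satisfies the measure separation condition: every self-similar measure gives
measure zero to `γ i (K) ∩ γ j (K)` for `i ≠ j`. -/
def MeasureSeparation {K : Type*} [MetricSpace K] [MeasurableSpace K] {n : ℕ}
    (γ : Fin n → K → K) : Prop :=
  ∀ p : Fin n → ℝ, (∀ i, 0 < p i) → (∑ i, p i) = 1 →
    ∀ μ : Measure K, IsSelfSimilarMeasure γ p μ →
      ∀ i j : Fin n, i ≠ j → μ (γ i '' Set.univ ∩ γ j '' Set.univ) = 0

/-- If `K` is self-similar with respect to `γ` and `γ` satisfies the measure separation
condition, then the Hutchinson measure satisfies `μ (γ i '' E) = (1/n) * μ E` for every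
Borel set `E` and every `i`. -/
theorem hutchinson_measure_image {K : Type*} [MetricSpace K] [CompactSpace K] [Nonempty K]
    [MeasurableSpace K] [BorelSpace K] {n : ℕ} (hn : 1 ≤ n)
    (γ : Fin n → K → K) (hγ : ∀ i, ProperContraction (γ i))
    (hss : SelfSimilarSet γ) (hsep : MeasureSeparation γ)
    (μ : Measure K) (hμ : IsHutchinsonMeasure γ μ)
    (E : Set K) (hE : MeasurableSet E) (i : Fin n) :
    μ (γ i '' E) = (n : ℝ≥0∞)⁻¹ * μ E := by
  -- basic facts about the maps
  have hcont : ∀ j, Continuous (γ j) := by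
    intro j
    obtain ⟨c₁, c₂, hc₁, h12, hc₂, h⟩ := hγ j
    exact LipschitzWith.continuous (K := c₂.toNNReal) (fun x y => by
      simpa [edist_dist, Real.toNNReal] using
        (ENNReal.ofReal_le_ofReal (h x y).2).trans
          (by rw [ENNReal.ofReal_mul (le_of_lt (hc₁.trans_le h12))]
              gcongr
              · exact le_rfl))
  have hinj : ∀ j, Function.Injective (γ j) := by
    intro j x y hxy
    obtain ⟨c₁, c₂, hc₁, h12, hc₂, h⟩ := hγ j
    have := (h x y).1
    rw [hxy, dist_self] at this
    have hd0 : dist x y ≤ 0 := by nlinarith [@dist_nonneg K _ x y]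
    exact dist_le_zero.mp hd0
  have hembj : ∀ j, MeasurableEmbedding (γ j) := fun j =>
    ((hcont j).isClosedEmbedding (hinj j)).measurableEmbedding
  have hnpos : (0:ℝ≥0∞) < (n : ℝ≥0∞) := by exact_mod_cast Nat.pos_of_ne_zero (by omega)
  have hninv_ne_top : (n : ℝ≥0∞)⁻¹ ≠ ⊤ := ENNReal.inv_ne_top.mpr hnpos.ne'
  have hninv_ne_zero : (n : ℝ≥0∞)⁻¹ ≠ 0 := ENNReal.inv_ne_zero.mpr (ENNReal.natCast_ne_top n)
  -- μ is a self-similar measure with weights 1/n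
  have hofReal : ENNReal.ofReal ((n:ℝ))⁻¹ = (n : ℝ≥0∞)⁻¹ := by
    rw [ENNReal.ofReal_inv_of_pos (by exact_mod_cast Nat.pos_of_ne_zero (by omega) : (0:ℝ) < n)]
    simp
  have hself : IsSelfSimilarMeasure γ (fun _ => (1:ℝ)/n) μ := by
    refine ⟨hμ.1, fun F hF => ?_⟩
    rw [hμ.2 F hF, Finset.mul_sum]
    simp [one_div, hofReal]
  -- measure separation for μ
  have hmeasK : ∀ j : Fin n, MeasurableSet (γ j '' Set.univ) :=
    fun j => ((isCompact_univ.image (hcont j)).isClosed).measurableSet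
  have hnull : ∀ j : Fin n, j ≠ i → μ (γ i '' Set.univ ∩ γ j '' Set.univ) = 0 := by
    intro j hj
    exact hsep (fun _ => (1:ℝ)/n) (fun _ => by positivity)
      (by
        rw [Finset.sum_const]
        simp only [Finset.card_univ, Fintype.card_fin, nsmul_eq_mul]
        field_simp)
      μ hself i j (fun h => hj h.symm)
  -- preimages of null sets are null
  have hpre_null : ∀ (N : Set K), MeasurableSet N → μ N = 0 → ∀ j, μ (γ j ⁻¹' N) = 0 := by
    intro N hN hN0 j
    have := hμ.2 N hN
    rw [hN0] at this
    have hsum : ∑ k, μ (γ k ⁻¹' N) = 0 := by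
      by_contra h
      exact h (by
        rcases mul_eq_zero.mp this.symm with h' | h'
        · exact absurd h' hninv_ne_zero
        · exact h')
    exact (Finset.sum_eq_zero_iff.mp hsum) j (Finset.mem_univ j)
  -- main computation
  have hEimg : MeasurableSet (γ i '' E) := (hembj i).measurableSet_image.mpr hE
  rw [hμ.2 _ hEimg]
  have hterm : ∀ j : Fin n, μ (γ j ⁻¹' (γ i '' E)) = if j = i then μ E else 0 := by
    intro j
    by_cases hji : j = i
    · subst hji
      rw [Set.preimage_image_eq _ (hinj j)]
      simp
    · rw [if_neg hji]
      refine measure_mono_null ?_ (hpre_null _ ((hmeasK i).inter (hmeasK j)) (hnull j hji) j)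
      intro x hx
      rcases hx with ⟨e, he, hge⟩
      exact ⟨⟨e, trivial, hge⟩, ⟨x, trivial, rfl⟩⟩
  rw [Finset.sum_congr rfl (fun j _ => hterm j)]
  simp
end
end

section
/- Let (K, d) be a compact metric space, let γ = (γ₁, …, γₙ) be a system of proper contractions on K, and let φ: K → K be a Borel measurable map having γ₁, …, γₙ as inverse branches. Assume that K is self-similar with respect to γ and that γ satisfies the measure separation condition in K. Then φ preserves the Hutchinson measure, i.e., the pushforward measure φ_*μ^H equals μ^H (equivalently, μ^H(φ⁻¹(E)) = μ^H(E) for every Borel set E). -/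
open MeasureTheory Set Filter Topology
open scoped ENNReal NNReal

noncomputable section

/-- If `K` is self-similar with respect to `γ`, `γ` satisfies the measure separation condition,
and the Borel measurable map `φ` has `γ₁, …, γₙ` as inverse branches, then `φ` preserves the
Hutchinson measure: `Measure.map φ μ = μ`. -/
theorem hutchinson_measure_preserving {K : Type*} [MetricSpace K] [CompactSpace K] [Nonempty K]
    [MeasurableSpace K] [BorelSpace K] {n : ℕ} (hn : 1 ≤ n)
    (γ : Fin n → K → K) (hγ : ∀ i, ProperContraction (γ i))
    (φ : K → K) (hφ : Measurable φ) (hbranch : ∀ (i : Fin n) (x : K), φ (γ i x) = x)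
    (hss : SelfSimilarSet γ) (hsep : MeasureSeparation γ)
    (μ : Measure K) (hμ : IsHutchinsonMeasure γ μ) :
    Measure.map φ μ = μ := by
  obtain ⟨hprob, hself⟩ := hμ
  have hn0 : (n : ℝ≥0∞) ≠ 0 := Nat.cast_ne_zero.mpr (Nat.one_le_iff_ne_zero.mp hn)
  have hnt : (n : ℝ≥0∞) ≠ ⊤ := ENNReal.natCast_ne_top n
  -- basic properties of the γ i
  have hinj : ∀ i, Function.Injective (γ i) := by
    intro i x y hxy
    obtain ⟨c₁, c₂, hc₁, h12, hc₂, hb⟩ := hγ i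
    have := (hb x y).1
    rw [hxy] at this
    simp only [dist_self] at this
    have : dist x y ≤ 0 := by nlinarith
    exact dist_le_zero.mp this
  have hcont : ∀ i, Continuous (γ i) := by
    intro i
    obtain ⟨c₁, c₂, hc₁, h12, hc₂, hb⟩ := hγ i
    exact (LipschitzWith.of_dist_le_mul (K := ⟨c₂, by linarith⟩)
      (fun x y => by exact (hb x y).2)).continuous
  have hme : ∀ i, MeasurableEmbedding (γ i) := fun i =>
    ((hcont i).isClosedEmbedding (hinj i)).measurableEmbedding
  have himgmeas : ∀ i (E : Set K), MeasurableSet E → MeasurableSet (γ i '' E) :=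
    fun i E hE => (hme i).measurableSet_image.2 hE
  -- μ is a self-similar measure with weights 1/n
  have hssm : IsSelfSimilarMeasure γ (fun _ => (1 : ℝ) / n) μ := by
    refine ⟨hprob, fun E hE => ?_⟩
    rw [hself E hE, Finset.mul_sum]
    refine Finset.sum_congr rfl fun i _ => ?_
    congr 1
    rw [ENNReal.ofReal_div_of_pos (by exact_mod_cast hn), ENNReal.ofReal_one,
      ENNReal.ofReal_natCast, one_div]
  -- overlaps are null
  have hnull : ∀ i j : Fin n, i ≠ j → μ (γ i '' Set.univ ∩ γ j '' Set.univ) = 0 := by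
    intro i j hij
    refine hsep (fun _ => (1 : ℝ) / n) (fun _ => by positivity) ?_ μ hssm i j hij
    rw [Finset.sum_const, Finset.card_univ, Fintype.card_fin]
    rw [nsmul_eq_mul, mul_one_div_cancel (Nat.cast_ne_zero.mpr (Nat.one_le_iff_ne_zero.mp hn))]
  -- preimages of null sets are null
  have hpre : ∀ (N : Set K), MeasurableSet N → μ N = 0 → ∀ j, μ (γ j ⁻¹' N) = 0 := by
    intro N hN h0 j
    have := hself N hN
    rw [h0] at this
    have hsum : ∑ i, μ (γ i ⁻¹' N) = 0 := by
      by_contra h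
      exact h (by
        rcases mul_eq_zero.mp this.symm with h1 | h1
        · exact absurd h1 (ENNReal.inv_ne_zero.mpr hnt)
        · exact h1)
    exact (Finset.sum_eq_zero_iff.mp hsum) j (Finset.mem_univ j)
  have hovmeas : ∀ i j : Fin n, MeasurableSet (γ i '' Set.univ ∩ γ j '' Set.univ) :=
    fun i j => ((himgmeas i _ MeasurableSet.univ).inter (himgmeas j _ MeasurableSet.univ))
  -- key computation: μ (γ i '' E) = n⁻¹ * μ E
  have key : ∀ (i : Fin n) (E : Set K), MeasurableSet E →
      μ (γ i '' E) = (n : ℝ≥0∞)⁻¹ * μ E := by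
    intro i E hE
    rw [hself (γ i '' E) (himgmeas i E hE)]
    congr 1
    rw [Finset.sum_eq_single i]
    · congr 1
      exact Function.Injective.preimage_image (hinj i) E
    · intro j _ hji
      refine measure_mono_null (fun x hx => ?_) (hpre _ (hovmeas i j) (hnull i j (Ne.symm hji)) j)
      exact ⟨(Set.image_mono (Set.subset_univ E)) hx, ⟨x, trivial, rfl⟩⟩
    · intro h; exact absurd (Finset.mem_univ i) h
  refine Measure.ext fun E hE => ?_
  rw [Measure.map_apply hφ hE]
  -- φ ⁻¹' E = ⋃ i, γ i '' E
  have hdecomp : φ ⁻¹' E = ⋃ i, γ i '' E := by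
    ext x
    constructor
    · intro hx
      have : x ∈ ⋃ i, γ i '' Set.univ := by rw [hss]; trivial
      obtain ⟨_, ⟨i, rfl⟩, y, _, rfl⟩ := this
      exact mem_iUnion.mpr ⟨i, y, by rwa [Set.mem_preimage, hbranch i y] at hx, rfl⟩
    · intro hx
      obtain ⟨_, ⟨i, rfl⟩, y, hy, rfl⟩ := hx
      simpa [Set.mem_preimage, hbranch i y] using hy
  rw [hdecomp]
  have hdisj : Pairwise (Function.onFun (MeasureTheory.AEDisjoint μ) fun i => γ i '' E) := by
    intro i j hij
    exact measure_mono_null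
      (Set.inter_subset_inter (Set.image_mono (Set.subset_univ E))
        (Set.image_mono (Set.subset_univ E))) (hnull i j hij)
  rw [measure_iUnion₀ hdisj (fun i => (himgmeas i E hE).nullMeasurableSet)]
  have : ∀ i : Fin n, μ (γ i '' E) = (n : ℝ≥0∞)⁻¹ * μ E := fun i => key i E hE
  simp_rw [this]
  rw [tsum_fintype, Finset.sum_const, Finset.card_univ, Fintype.card_fin, nsmul_eq_mul, ← mul_assoc,
    ENNReal.mul_inv_cancel hn0 hnt, one_mul]
end
end

section
/- Let (K, d) be a compact metric space, let γ = (γ₁, …, γₙ) be a system of proper contractions on K, and let φ: K → K be a Borel measurable map having γ₁, …, γₙ as inverse branches. Assume that K is self-similar with respect to γ and that γ satisfies the measure separation condition in K. Then for every 1 ≤ p < ∞ and every f ∈ L^p(K, μ^H) (complex valued), the function f∘φ belongs to L^p(K, μ^H) and ‖f∘φ‖_p = ‖f‖_p; that is, the composition operator C_φ f = f∘φ is an isometry on L^p(K, μ^H). -/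
open MeasureTheory Set Filter Topology
open scoped ENNReal NNReal

noncomputable section

/-- Under the hypotheses of self-similarity and measure separation, for every `1 ≤ p < ∞`
the composition operator `C_φ f = f ∘ φ` is an isometry on `L^p(K, μ^H)`:
`f ∘ φ ∈ L^p` and `‖f ∘ φ‖_p = ‖f‖_p`. -/
theorem composition_isometry_Lp {K : Type*} [MetricSpace K] [CompactSpace K] [Nonempty K]
    [MeasurableSpace K] [BorelSpace K] {n : ℕ} (hn : 1 ≤ n)
    (γ : Fin n → K → K) (hγ : ∀ i, ProperContraction (γ i))
    (φ : K → K) (hφ : Measurable φ) (hbranch : ∀ (i : Fin n) (x : K), φ (γ i x) = x)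
    (hss : SelfSimilarSet γ) (hsep : MeasureSeparation γ)
    (μ : Measure K) (hμ : IsHutchinsonMeasure γ μ)
    (p : ℝ≥0∞) (hp1 : 1 ≤ p) (hp2 : p ≠ ∞)
    (f : K → ℂ) (hf : MemLp f p μ) :
    MemLp (f ∘ φ) p μ ∧ eLpNorm (f ∘ φ) p μ = eLpNorm f p μ := by
  obtain ⟨hprob, hH⟩ := hμ
  have hmp : MeasurePreserving φ μ μ := by
    refine ⟨hφ, ?_⟩
    ext E hE
    rw [Measure.map_apply hφ hE]
    have : ∀ i : Fin n, γ i ⁻¹' (φ ⁻¹' E) = E := by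
      intro i
      ext x
      simp [Set.mem_preimage, hbranch i x]
    rw [hH _ (hφ hE)]
    simp only [this, Finset.sum_const, Finset.card_univ, Fintype.card_fin, nsmul_eq_mul]
    have hn0 : (n : ℝ≥0∞) ≠ 0 := Nat.cast_ne_zero.mpr (by omega)
    rw [← mul_assoc, ENNReal.inv_mul_cancel hn0 (by simp), one_mul]
  exact ⟨hf.comp_measurePreserving hmp,
    eLpNorm_comp_measurePreserving hf.aestronglyMeasurable hmp⟩
end
end

section
/- Let (K, d) be a compact metric space, let γ = (γ₁, …, γₙ) be a system of proper contractions on K, and let φ: K → K be a Borel measurable map having γ₁, …, γₙ as inverse branches. Assume that K is self-similar with respect to γ and that γ satisfies the measure separation condition in K. Then for every f ∈ L^∞(K, μ^H) and every g ∈ L¹(K, μ^H) (complex valued), ∫_K f(x)·g(φ(x)) dμ^H(x) = ∫_K (L_φ f)(y)·g(y) dμ^H(y), where (L_φ f)(y) = (1/n)·Σ_{i=1}^n f(γᵢ(y)). -/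
open MeasureTheory Set Filter Topology
open scoped ENNReal NNReal

noncomputable section

/-- Under self-similarity and measure separation, for `f ∈ L^∞(K, μ^H)` and `g ∈ L¹(K, μ^H)`,
`∫ f(x) g(φ(x)) dμ^H(x) = ∫ (L_φ f)(y) g(y) dμ^H(y)`, where
`(L_φ f)(y) = (1/n) ∑ᵢ f(γᵢ(y))`. -/
theorem transfer_operator_duality {K : Type*} [MetricSpace K] [CompactSpace K] [Nonempty K]
    [MeasurableSpace K] [BorelSpace K] {n : ℕ} (hn : 1 ≤ n)
    (γ : Fin n → K → K) (hγ : ∀ i, ProperContraction (γ i))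
    (φ : K → K) (hφ : Measurable φ) (hbranch : ∀ (i : Fin n) (x : K), φ (γ i x) = x)
    (hss : SelfSimilarSet γ) (hsep : MeasureSeparation γ)
    (μ : Measure K) (hμ : IsHutchinsonMeasure γ μ)
    (f : K → ℂ) (hf : MemLp f ∞ μ)
    (g : K → ℂ) (hg : Integrable g μ) :
    ∫ x, f x * g (φ x) ∂μ = ∫ y, ((n : ℂ)⁻¹ * ∑ i, f (γ i y)) * g y ∂μ := by
  have hnR : (0 : ℝ) < n := by exact_mod_cast hn
  have hn0 : (n : ℝ≥0∞) ≠ 0 := Nat.cast_ne_zero.mpr (by omega)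
  have hnt : (n : ℝ≥0∞) ≠ ⊤ := ENNReal.natCast_ne_top n
  -- continuity / measurability of the branches
  have hγc : ∀ i, Continuous (γ i) := by
    intro i
    obtain ⟨c₁, c₂, _, _, _, h⟩ := hγ i
    exact LipschitzWith.continuous (K := c₂.toNNReal)
      (fun x y => by
        have := (h x y).2
        rw [edist_dist, edist_dist]
        calc ENNReal.ofReal (dist (γ i x) (γ i y)) ≤ ENNReal.ofReal (c₂ * dist x y) :=
              ENNReal.ofReal_le_ofReal this
          _ = (c₂.toNNReal : ℝ≥0∞) * ENNReal.ofReal (dist x y) := by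
              rw [ENNReal.ofReal_mul' dist_nonneg]; rfl)
  have hγm : ∀ i, Measurable (γ i) := fun i => (hγc i).measurable
  -- μ is invariant under φ
  have hmapφ : Measure.map φ μ = μ := by
    ext E hE
    rw [Measure.map_apply hφ hE, hμ.2 _ (hφ hE)]
    have : ∀ i, γ i ⁻¹' (φ ⁻¹' E) = E := by
      intro i; ext x; simp [Set.mem_preimage, hbranch i x]
    simp only [this, Finset.sum_const, Finset.card_univ, Fintype.card_fin, nsmul_eq_mul]
    rw [← mul_assoc, ENNReal.inv_mul_cancel hn0 hnt, one_mul]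
  -- μ = (1/n) • ∑ᵢ (γᵢ)_* μ
  have hμeq : μ = (n : ℝ≥0∞)⁻¹ • ∑ i, Measure.map (γ i) μ := by
    ext E hE
    rw [Measure.smul_apply, Measure.finset_sum_apply, hμ.2 E hE, smul_eq_mul]
    congr 1
    exact Finset.sum_congr rfl fun i _ => (Measure.map_apply (hγm i) hE).symm
  -- each (γᵢ)_* μ ≤ n • μ
  have hle : ∀ i : Fin n, Measure.map (γ i) μ ≤ (n : ℝ≥0∞) • μ := by
    intro i
    intro E
    rw [Measure.smul_apply, smul_eq_mul]
    rcases eq_top_or_lt_top (μ E) with h | h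
    · exact le_top.trans_eq (by rw [h, ENNReal.mul_top hn0])
    have hout := (Measure.map (γ i) μ).mono (subset_toMeasurable μ E)
    calc Measure.map (γ i) μ E ≤ Measure.map (γ i) μ (toMeasurable μ E) := hout
      _ = μ (γ i ⁻¹' toMeasurable μ E) :=
          Measure.map_apply (hγm i) (measurableSet_toMeasurable μ E)
      _ ≤ ∑ j, μ (γ j ⁻¹' toMeasurable μ E) :=
          Finset.single_le_sum (f := fun j => μ (γ j ⁻¹' toMeasurable μ E))
            (fun _ _ => zero_le) (Finset.mem_univ i)
      _ = (n : ℝ≥0∞) * ((n : ℝ≥0∞)⁻¹ * ∑ j, μ (γ j ⁻¹' toMeasurable μ E)) := by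
          rw [← mul_assoc, ENNReal.mul_inv_cancel hn0 hnt, one_mul]
      _ = (n : ℝ≥0∞) * μ (toMeasurable μ E) := by
          rw [← hμ.2 _ (measurableSet_toMeasurable μ E)]
      _ = (n : ℝ≥0∞) * μ E := by rw [measure_toMeasurable]
  -- g ∘ φ is integrable
  have hgφ : Integrable (fun x => g (φ x)) μ := by
    have : Integrable g (Measure.map φ μ) := by rw [hmapφ]; exact hg
    exact (integrable_map_measure (by rw [hmapφ]; exact hg.1) hφ.aemeasurable).mp this
  -- bound on f
  obtain ⟨C, hC⟩ : ∃ C : ℝ, ∀ᵐ x ∂μ, ‖f x‖ ≤ C := by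
    refine ⟨(eLpNormEssSup f μ).toReal, ?_⟩
    have h1 := ae_le_eLpNormEssSup (f := f) (μ := μ)
    have h2 : eLpNormEssSup f μ < ⊤ := by
      have := hf.2; rwa [eLpNorm_exponent_top] at this
    filter_upwards [h1] with x hx
    have : (‖f x‖₊ : ℝ≥0∞) ≤ eLpNormEssSup f μ := hx
    have := ENNReal.toReal_mono h2.ne this
    simpa using this
  -- h := f · (g ∘ φ) is integrable
  set h : K → ℂ := fun x => f x * g (φ x) with hh
  have hInt : Integrable h μ := hgφ.bdd_mul hf.1 hC
  have hIntmap : ∀ i : Fin n, Integrable h (Measure.map (γ i) μ) := fun i =>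
    (hInt.smul_measure hnt).mono_measure (hle i)
  have hIntcomp : ∀ i : Fin n, Integrable (fun x => f (γ i x) * g x) μ := by
    intro i
    have := (integrable_map_measure (hIntmap i).1 (hγm i).aemeasurable).mp (hIntmap i)
    have heq : (h ∘ γ i) = fun x => f (γ i x) * g x := by
      funext x; simp [hh, hbranch i x]
    rwa [heq] at this
  -- main computation
  calc ∫ x, f x * g (φ x) ∂μ
      = ∫ x, h x ∂((n : ℝ≥0∞)⁻¹ • ∑ i, Measure.map (γ i) μ) := by rw [← hμeq]
    _ = ((n : ℝ≥0∞)⁻¹).toReal • ∫ x, h x ∂(∑ i, Measure.map (γ i) μ) := by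
        rw [integral_smul_measure]
    _ = ((n : ℝ≥0∞)⁻¹).toReal • ∑ i, ∫ x, h x ∂(Measure.map (γ i) μ) := by
        rw [integral_finset_sum_measure (fun i _ => hIntmap i)]
    _ = ((n : ℝ≥0∞)⁻¹).toReal • ∑ i, ∫ x, f (γ i x) * g x ∂μ := by
        congr 1
        refine Finset.sum_congr rfl fun i _ => ?_
        rw [integral_map (hγm i).aemeasurable (hIntmap i).1]
        exact integral_congr_ae (Filter.Eventually.of_forall fun x => by
          simp [hh, hbranch i x])
    _ = ∫ y, ((n : ℂ)⁻¹ * ∑ i, f (γ i y)) * g y ∂μ := by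
        rw [← integral_finset_sum _ (fun i _ => hIntcomp i), ENNReal.toReal_inv,
          ← integral_smul]
        refine integral_congr_ae (Filter.Eventually.of_forall fun y => ?_)
        simp only [Complex.real_smul, ← Finset.sum_mul, ENNReal.toReal_natCast]
        push_cast
        ring
end
end

section
/- Let (K, d) be a compact metric space, let γ = (γ₁, …, γₙ) be a system of proper contractions on K, and let φ: K → K be continuous with γ₁, …, γₙ as inverse branches. Assume that K is self-similar with respect to γ and that γ satisfies the measure separation condition in K. Let C_φ denote the (bounded) composition operator f ↦ f∘φ on the complex Hilbert space L²(K, μ^H). Then the Hilbert space adjoint C_φ* is given by (C_φ* f)(y) = (1/n)·Σ_{i=1}^n f(γᵢ(y)) for μ^H-almost every y; equivalently, C_φ* = (1/n)·Σ_{i=1}^n C_{γᵢ}, where C_{γᵢ} f = f∘γᵢ. -/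
open MeasureTheory Set Filter Topology
open scoped ENNReal NNReal

noncomputable section

set_option maxHeartbeats 2000000

/-- Under self-similarity and measure separation, the Hilbert space adjoint of the composition
operator `C_φ` on `L²(K, μ^H)` is given by `(C_φ* f)(y) = (1/n) ∑ᵢ f(γᵢ(y))` a.e. -/
theorem adjoint_of_composition_operator {K : Type*} [MetricSpace K] [CompactSpace K] [Nonempty K]
    [MeasurableSpace K] [BorelSpace K] {n : ℕ} (hn : 1 ≤ n)
    (γ : Fin n → K → K) (hγ : ∀ i, ProperContraction (γ i))
    (φ : K → K) (hφ : Continuous φ) (hbranch : ∀ (i : Fin n) (x : K), φ (γ i x) = x)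
    (hss : SelfSimilarSet γ) (hsep : MeasureSeparation γ)
    (μ : Measure K) (hμ : IsHutchinsonMeasure γ μ)
    (Cφ : Lp ℂ 2 μ →L[ℂ] Lp ℂ 2 μ)
    (hCφ : ∀ f : Lp ℂ 2 μ, (Cφ f : K → ℂ) =ᵐ[μ] fun x => f (φ x)) :
    ∀ f : Lp ℂ 2 μ,
      ((ContinuousLinearMap.adjoint Cφ) f : K → ℂ) =ᵐ[μ]
        fun y => (n : ℂ)⁻¹ * ∑ i, f (γ i y) := by
  classical
  intro f
  have hn0 : (n : ℝ≥0∞) ≠ 0 := by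
    exact_mod_cast Nat.one_le_iff_ne_zero.mp hn
  have hntop : (n : ℝ≥0∞) ≠ ∞ := ENNReal.natCast_ne_top n
  have hγc : ∀ i, Continuous (γ i) := by
    intro i
    obtain ⟨c₁, c₂, hc₁, h12, hc₂, hb⟩ := hγ i
    have hc₂0 : (0:ℝ) ≤ c₂ := le_trans hc₁.le h12
    exact (LipschitzWith.of_dist_le_mul (K := ⟨c₂, hc₂0⟩)
      (f := γ i) (fun x y => (hb x y).2)).continuous
  have hγm : ∀ i, Measurable (γ i) := fun i => (hγc i).measurable
  have hφm : Measurable φ := hφ.measurable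
  -- μ = (1/n) • ∑ᵢ (γᵢ)_* μ
  have hμeq : μ = (n : ℝ≥0∞)⁻¹ • ∑ i, Measure.map (γ i) μ := by
    ext E hE
    rw [Measure.smul_apply, Measure.finset_sum_apply, hμ.2 E hE, smul_eq_mul]
    congr 1
    exact Finset.sum_congr rfl fun i _ => (Measure.map_apply (hγm i) hE).symm
  have hle : ∀ i, Measure.map (γ i) μ ≤ (n : ℝ≥0∞) • μ := by
    intro i
    rw [Measure.le_iff]
    intro s hs
    rw [Measure.map_apply (hγm i) hs, Measure.smul_apply, smul_eq_mul]
    have h1 : μ (γ i ⁻¹' s) ≤ ∑ j, μ (γ j ⁻¹' s) :=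
      Finset.single_le_sum (f := fun j => μ (γ j ⁻¹' s)) (fun j _ => zero_le)
        (Finset.mem_univ i)
    have h2 : (n : ℝ≥0∞) * μ s = ∑ j, μ (γ j ⁻¹' s) := by
      rw [hμ.2 s hs, ← mul_assoc, ENNReal.mul_inv_cancel hn0 hntop, one_mul]
    exact h1.trans h2.ge
  have habs : ∀ i, Measure.map (γ i) μ ≪ μ :=
    fun i => Measure.absolutelyContinuous_of_le_smul (hle i)
  -- φ preserves μ
  have hφmap : Measure.map φ μ = μ := by
    ext E hE
    rw [Measure.map_apply hφm hE, hμ.2 _ (hφm hE)]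
    have hpre : ∀ i : Fin n, γ i ⁻¹' (φ ⁻¹' E) = E := by
      intro i; ext x; simp [hbranch i x]
    simp only [hpre, Finset.sum_const, Finset.card_univ, Fintype.card_fin]
    rw [nsmul_eq_mul, ← mul_assoc, ENNReal.inv_mul_cancel hn0 hntop, one_mul]
  -- membership in L² of compositions with γ i
  have hmemcomp : ∀ i, MemLp (fun y => (f : K → ℂ) (γ i y)) 2 μ := by
    intro i
    have h1 : MemLp (f : K → ℂ) 2 (Measure.map (γ i) μ) :=
      ((Lp.memLp f).smul_measure hntop).mono_measure (hle i)
    exact (memLp_map_measure_iff h1.aestronglyMeasurable (hγm i).aemeasurable).mp h1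
  set wf : K → ℂ := fun y => (n : ℂ)⁻¹ * ∑ i, (f : K → ℂ) (γ i y) with hwf
  have hwmem : MemLp wf 2 μ := by
    simpa [hwf] using (memLp_finsetSum (μ := μ) (p := (2:ℝ≥0∞)) Finset.univ
      (fun i _ => hmemcomp i)).const_mul ((n : ℂ)⁻¹)
  set w : Lp ℂ 2 μ := hwmem.toLp wf with hw
  -- each term is integrable against g
  have hkey : ∀ g : Lp ℂ 2 μ,
      inner (𝕜 := ℂ) w g = inner (𝕜 := ℂ) f (Cφ g) := by
    intro g
    set I : Fin n → ℂ :=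
      fun i => ∫ y, (starRingEnd ℂ) ((f : K → ℂ) (γ i y)) * (g : K → ℂ) y ∂μ with hI
    have hIint : ∀ i, Integrable
        (fun y => (starRingEnd ℂ) ((f : K → ℂ) (γ i y)) * (g : K → ℂ) y) μ := by
      intro i
      have h2 := L2.integrable_inner (𝕜 := ℂ) ((hmemcomp i).toLp (fun y => (f : K → ℂ) (γ i y))) g
      refine h2.congr ?_
      filter_upwards [(hmemcomp i).coeFn_toLp] with x hx
      simp [RCLike.inner_apply, hx, mul_comm]
    -- RHS computation
    set h : K → ℂ := fun x => (starRingEnd ℂ) ((f : K → ℂ) x) * (g : K → ℂ) (φ x)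
      with hh
    have hint : Integrable h μ := by
      refine (L2.integrable_inner (𝕜 := ℂ) f (Cφ g)).congr ?_
      filter_upwards [hCφ g] with x hx
      simp [hh, RCLike.inner_apply, hx, mul_comm]
    have hint_i : ∀ i, Integrable h (Measure.map (γ i) μ) :=
      fun i => (hint.smul_measure hntop).mono_measure (hle i)
    have hstep : ∫ x, h x ∂μ = ((n : ℝ≥0∞)⁻¹).toReal • ∑ i, I i := by
      conv_lhs => rw [hμeq]
      rw [integral_smul_measure, integral_finset_sum_measure (fun i _ => hint_i i)]
      congr 1
      refine Finset.sum_congr rfl fun i _ => ?_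
      rw [integral_map (hγm i).aemeasurable (hint_i i).aestronglyMeasurable]
      simp only [hh, hbranch, hI]
    have hR : inner (𝕜 := ℂ) f (Cφ g) = ((n : ℝ≥0∞)⁻¹).toReal • ∑ i, I i := by
      rw [L2.inner_def, ← hstep]
      refine integral_congr_ae ?_
      filter_upwards [hCφ g] with x hx
      simp [hh, RCLike.inner_apply, hx, mul_comm]
    have hLcongr : inner (𝕜 := ℂ) w g = (n : ℂ)⁻¹ * ∑ i, I i := by
      rw [L2.inner_def]
      have : ∫ x, inner (𝕜 := ℂ) (w x) ((g : K → ℂ) x) ∂μ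
          = ∫ x, (n : ℂ)⁻¹ * ∑ i, (starRingEnd ℂ) ((f : K → ℂ) (γ i x)) * (g : K → ℂ) x ∂μ := by
        refine integral_congr_ae ?_
        filter_upwards [hwmem.coeFn_toLp] with x hx
        have : (w : K → ℂ) x = wf x := hx
        rw [RCLike.inner_apply, this]
        simp only [hwf, map_mul, map_sum, map_inv₀, map_natCast]
        rw [mul_comm, mul_assoc, Finset.sum_mul]
      rw [this, integral_const_mul]
      congr 1
      exact integral_finset_sum Finset.univ (fun i _ => hIint i)
    rw [hLcongr, hR]
    rw [ENNReal.toReal_inv, ENNReal.toReal_natCast, Complex.real_smul]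
    push_cast
    ring
  have heq : ContinuousLinearMap.adjoint Cφ f = w := by
    refine ext_inner_right ℂ ?_
    intro g
    rw [ContinuousLinearMap.adjoint_inner_left, ← hkey g]
  rw [heq]
  exact hwmem.coeFn_toLp
end
end

section
/- Let (K, d) be a compact metric space, let γ = (γ₁, …, γₙ) be a system of proper contractions on K, and let φ: K → K be continuous with γ₁, …, γₙ as inverse branches. Assume that K is self-similar with respect to γ and that γ satisfies the measure separation condition in K. Let C_φ be the composition operator f ↦ f∘φ on L²(K, μ^H) and, for a ∈ L^∞(K, μ^H), let M_a be the multiplication operator f ↦ a·f on L²(K, μ^H). Then C_φ* M_a C_φ = M_{L_φ(a)}, where (L_φ a)(x) = (1/n)·Σ_{i=1}^n a(γᵢ(x)). -/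
open MeasureTheory Set Filter Topology
open scoped ENNReal NNReal

noncomputable section

theorem hutchinson_integral {K : Type*} [MetricSpace K]
    [MeasurableSpace K] [BorelSpace K] {n : ℕ} (hn : 1 ≤ n)
    (γ : Fin n → K → K) (hγm : ∀ i, Measurable (γ i))
    (μ : Measure K) (hμ : IsHutchinsonMeasure γ μ)
    (H : K → ℂ) (hH : Integrable H μ) :
    (∫ x, H x ∂μ = (n : ℝ)⁻¹ • ∑ i, ∫ x, H (γ i x) ∂μ) ∧
      ∀ i, Integrable (fun x => H (γ i x)) μ := by
  have hn0 : (n : ℝ≥0∞) ≠ 0 := Nat.cast_ne_zero.mpr (by omega)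
  have hnt : (n : ℝ≥0∞) ≠ ⊤ := ENNReal.natCast_ne_top n
  have hmap : μ = (n : ℝ≥0∞)⁻¹ • ∑ i, μ.map (γ i) := by
    ext E hE
    rw [Measure.smul_apply, Measure.finset_sum_apply, smul_eq_mul, hμ.2 E hE]
    congr 1
    exact Finset.sum_congr rfl fun i _ => (Measure.map_apply (hγm i) hE).symm
  have hsum : (n : ℝ≥0∞) • μ = ∑ i, μ.map (γ i) := by
    conv_lhs => rw [hmap]
    rw [smul_smul, ENNReal.mul_inv_cancel hn0 hnt, one_smul]
  have hle : ∀ i, μ.map (γ i) ≤ (n : ℝ≥0∞) • μ := by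
    intro i
    rw [hsum]
    refine Measure.le_iff.mpr fun s hs => ?_
    rw [Measure.finset_sum_apply]
    exact Finset.single_le_sum (f := fun j => (μ.map (γ j)) s) (fun j _ => zero_le)
      (Finset.mem_univ i)
  have hHi : ∀ i, Integrable H (μ.map (γ i)) := fun i =>
    (hH.smul_measure hnt).mono_measure (hle i)
  have hHγ : ∀ i, Integrable (fun x => H (γ i x)) μ := fun i =>
    (integrable_map_measure (hHi i).1 (hγm i).aemeasurable).mp (hHi i)
  refine ⟨?_, hHγ⟩
  calc ∫ x, H x ∂μ = ∫ x, H x ∂((n : ℝ≥0∞)⁻¹ • ∑ i, μ.map (γ i)) := by rw [← hmap]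
    _ = ((n : ℝ≥0∞)⁻¹).toReal • ∫ x, H x ∂(∑ i, μ.map (γ i)) := integral_smul_measure _ _
    _ = (n : ℝ)⁻¹ • ∑ i, ∫ x, H x ∂(μ.map (γ i)) := by
        rw [integral_finset_sum_measure fun i _ => hHi i, ENNReal.toReal_inv,
          ENNReal.toReal_natCast]
    _ = (n : ℝ)⁻¹ • ∑ i, ∫ x, H (γ i x) ∂μ := by
        congr 1
        exact Finset.sum_congr rfl fun i _ => integral_map (hγm i).aemeasurable (hHi i).1

/-- Covariant relation: under self-similarity and measure separation,
`C_φ* M_a C_φ = M_{L_φ(a)}` for `a ∈ L^∞(K, μ^H)`, where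
`(L_φ a)(x) = (1/n) ∑ᵢ a(γᵢ(x))`. -/
theorem covariant_relation {K : Type*} [MetricSpace K] [CompactSpace K] [Nonempty K]
    [MeasurableSpace K] [BorelSpace K] {n : ℕ} (hn : 1 ≤ n)
    (γ : Fin n → K → K) (hγ : ∀ i, ProperContraction (γ i))
    (φ : K → K) (hφ : Continuous φ) (hbranch : ∀ (i : Fin n) (x : K), φ (γ i x) = x)
    (hss : SelfSimilarSet γ) (hsep : MeasureSeparation γ)
    (μ : Measure K) (hμ : IsHutchinsonMeasure γ μ)
    (Cφ : Lp ℂ 2 μ →L[ℂ] Lp ℂ 2 μ)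
    (hCφ : ∀ f : Lp ℂ 2 μ, (Cφ f : K → ℂ) =ᵐ[μ] fun x => f (φ x))
    (a : K → ℂ) (ha : MemLp a ∞ μ)
    (Ma : Lp ℂ 2 μ →L[ℂ] Lp ℂ 2 μ)
    (hMa : ∀ f : Lp ℂ 2 μ, (Ma f : K → ℂ) =ᵐ[μ] fun x => a x * f x)
    (MLa : Lp ℂ 2 μ →L[ℂ] Lp ℂ 2 μ)
    (hMLa : ∀ f : Lp ℂ 2 μ,
      (MLa f : K → ℂ) =ᵐ[μ] fun x => ((n : ℂ)⁻¹ * ∑ i, a (γ i x)) * f x) :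
    (ContinuousLinearMap.adjoint Cφ).comp (Ma.comp Cφ) = MLa := by
  have hγm : ∀ i, Measurable (γ i) := by
    intro i
    obtain ⟨c₁, c₂, h1, h12, h2, hb⟩ := hγ i
    have hc2 : (0 : ℝ) ≤ c₂ := le_trans h1.le h12
    exact (LipschitzWith.of_dist_le_mul (K := c₂.toNNReal) fun x y => by
      rw [Real.coe_toNNReal c₂ hc2]; exact (hb x y).2).continuous.measurable
  apply ContinuousLinearMap.ext
  intro f
  apply ext_inner_right ℂ
  intro g
  simp only [ContinuousLinearMap.comp_apply]
  rw [ContinuousLinearMap.adjoint_inner_left]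
  rw [L2.inner_def, L2.inner_def]
  simp only [RCLike.inner_apply']
  set F : K → ℂ := (f : K → ℂ)
  set G : K → ℂ := (g : K → ℂ)
  set H : K → ℂ := fun x => (starRingEnd ℂ) (a x * F (φ x)) * G (φ x) with hHdef
  have hae : (fun x => (starRingEnd ℂ) ((Ma (Cφ f) : K → ℂ) x) * (Cφ g : K → ℂ) x)
      =ᵐ[μ] H := by
    filter_upwards [hMa (Cφ f), hCφ f, hCφ g] with x h1 h2 h3
    simp only [hHdef, h1, h2, h3]
    rfl
  have hH : Integrable H μ := by
    refine (Integrable.congr ?_ hae)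
    have := L2.integrable_inner (𝕜 := ℂ) (Ma (Cφ f)) (Cφ g)
    simpa only [RCLike.inner_apply'] using this
  obtain ⟨hkey, hHγ⟩ := hutchinson_integral hn γ hγm μ hμ H hH
  have e1 : ∫ x, (starRingEnd ℂ) ((Ma (Cφ f) : K → ℂ) x) * (Cφ g : K → ℂ) x ∂μ
      = ∫ x, H x ∂μ := integral_congr_ae hae
  rw [e1, hkey]
  have hHγ' : ∀ i, (fun x => H (γ i x))
      = fun x => (starRingEnd ℂ) (a (γ i x)) * ((starRingEnd ℂ) (F x) * G x) := by
    intro i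
    funext x
    simp only [hHdef, hbranch i x, map_mul]
    ring
  have e2 : ∫ x, (starRingEnd ℂ) ((MLa f : K → ℂ) x) * G x ∂μ
      = ∫ x, ((n : ℂ)⁻¹ * ∑ i, (starRingEnd ℂ) (a (γ i x)))
          * ((starRingEnd ℂ) (F x) * G x) ∂μ := by
    refine integral_congr_ae ?_
    filter_upwards [hMLa f] with x h1
    rw [h1]
    simp only [map_mul, map_inv₀, map_sum, map_natCast]
    ring
  rw [e2]
  have e3 : ∀ x, ((n : ℂ)⁻¹ * ∑ i, (starRingEnd ℂ) (a (γ i x)))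
          * ((starRingEnd ℂ) (F x) * G x)
      = (n : ℂ)⁻¹ * ∑ i, (starRingEnd ℂ) (a (γ i x)) * ((starRingEnd ℂ) (F x) * G x) := by
    intro x
    rw [mul_assoc, Finset.sum_mul]
  simp only [e3]
  have hint : ∀ i, Integrable
      (fun x => (starRingEnd ℂ) (a (γ i x)) * ((starRingEnd ℂ) (F x) * G x)) μ := by
    intro i
    have := hHγ i
    rwa [hHγ' i] at this
  rw [integral_const_mul, integral_finset_sum _ fun i _ => hint i,
    Complex.real_smul, Complex.ofReal_inv, Complex.ofReal_natCast]
  congr 1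
  exact Finset.sum_congr rfl fun i _ => by rw [hHγ' i]
end
end

section
/- Let (K, d) be a compact metric space, let γ = (γ₁, …, γₙ) be a system of proper contractions on K, and assume that K is self-similar with respect to γ and that γ satisfies the measure separation condition in K. Then for every i = 1, …, n and every f ∈ L²(K, μ^H), the function f∘γᵢ belongs to L²(K, μ^H) and ‖f∘γᵢ‖₂ ≤ √n · ‖f‖₂; in particular the composition operator C_{γᵢ} f = f∘γᵢ is bounded on L²(K, μ^H). -/
open MeasureTheory Set Filter Topology
open scoped ENNReal NNReal

noncomputable section

/-- Under self-similarity and measure separation, for each `i` the composition operator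
`C_{γᵢ} f = f ∘ γᵢ` is bounded on `L²(K, μ^H)` with `‖f ∘ γᵢ‖₂ ≤ √n ‖f‖₂`. -/
theorem composition_by_branch_bounded {K : Type*} [MetricSpace K] [CompactSpace K] [Nonempty K]
    [MeasurableSpace K] [BorelSpace K] {n : ℕ} (hn : 1 ≤ n)
    (γ : Fin n → K → K) (hγ : ∀ i, ProperContraction (γ i))
    (hss : SelfSimilarSet γ) (hsep : MeasureSeparation γ)
    (μ : Measure K) (hμ : IsHutchinsonMeasure γ μ)
    (i : Fin n) (f : K → ℂ) (hf : MemLp f 2 μ) :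
    MemLp (f ∘ γ i) 2 μ ∧
      eLpNorm (f ∘ γ i) 2 μ ≤ ENNReal.ofReal (Real.sqrt n) * eLpNorm f 2 μ := by
  classical
  -- γ i is Lipschitz, hence continuous and measurable
  obtain ⟨c₁, c₂, hc₁, hc₁₂, hc₂, hcc⟩ := hγ i
  have hc₂0 : (0:ℝ) ≤ c₂ := le_trans hc₁.le hc₁₂
  have hcont : Continuous (γ i) :=
    (LipschitzWith.of_dist_le_mul (K := c₂.toNNReal) (fun x y => by
      simpa [Real.coe_toNNReal c₂ hc₂0] using (hcc x y).2)).continuous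
  have hmeas : Measurable (γ i) := hcont.measurable
  obtain ⟨hprob, hH⟩ := hμ
  have hn0 : (n : ℝ≥0∞) ≠ 0 := by
    simpa using Nat.one_le_iff_ne_zero.mp hn
  have hntop : (n : ℝ≥0∞) ≠ ⊤ := ENNReal.natCast_ne_top n
  -- key: map (γ i) μ ≤ n • μ
  have hle : Measure.map (γ i) μ ≤ (n : ℝ≥0∞) • μ := by
    rw [Measure.le_iff]
    intro s hs
    rw [Measure.map_apply hmeas hs]
    have h1 : μ s = (n : ℝ≥0∞)⁻¹ * ∑ j, μ (γ j ⁻¹' s) := hH s hs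
    have h2 : ∑ j, μ (γ j ⁻¹' s) = (n : ℝ≥0∞) * μ s := by
      rw [h1, ← mul_assoc, ENNReal.mul_inv_cancel hn0 hntop, one_mul]
    calc μ (γ i ⁻¹' s) ≤ ∑ j, μ (γ j ⁻¹' s) :=
          Finset.single_le_sum (f := fun j => μ (γ j ⁻¹' s)) (fun _ _ => zero_le) (Finset.mem_univ i)
      _ = (n : ℝ≥0∞) * μ s := h2
      _ = ((n : ℝ≥0∞) • μ) s := by simp
  have hac : Measure.map (γ i) μ ≪ μ :=
    (Measure.absolutelyContinuous_of_le hle).trans (Measure.absolutelyContinuous_of_le_smul le_rfl)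
  have hfm : AEStronglyMeasurable f (Measure.map (γ i) μ) := hf.1.mono_ac hac
  have hcomp_m : AEStronglyMeasurable (f ∘ γ i) μ := hfm.comp_measurable hmeas
  have hmapnorm : eLpNorm (f ∘ γ i) 2 μ = eLpNorm f 2 (Measure.map (γ i) μ) :=
    (eLpNorm_map_measure hfm hmeas.aemeasurable).symm
  have hsmul : eLpNorm f 2 ((n : ℝ≥0∞) • μ)
      = (n : ℝ≥0∞) ^ ((1:ℝ)/2) * eLpNorm f 2 μ := by
    rw [eLpNorm_smul_measure_of_ne_top (by norm_num : (2:ℝ≥0∞) ≠ ⊤)]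
    norm_num [smul_eq_mul]
  have hfac : (n : ℝ≥0∞) ^ ((1:ℝ)/2) = ENNReal.ofReal (Real.sqrt n) := by
    rw [Real.sqrt_eq_rpow, ← ENNReal.ofReal_rpow_of_nonneg (by positivity) (by norm_num)]
    congr 1
    simp
  have hbound : eLpNorm (f ∘ γ i) 2 μ ≤ ENNReal.ofReal (Real.sqrt n) * eLpNorm f 2 μ := by
    rw [hmapnorm, ← hfac, ← hsmul]
    exact eLpNorm_mono_measure f hle
  refine ⟨⟨hcomp_m, ?_⟩, hbound⟩
  exact lt_of_le_of_lt hbound (ENNReal.mul_lt_top ENNReal.ofReal_lt_top hf.2)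
end
end

section
/- Let (K, d) be a compact metric space, let γ = (γ₁, …, γₙ) be a system of proper contractions on K, and let φ: K → K be continuous with γ₁, …, γₙ as inverse branches. Assume that K is self-similar with respect to γ and that γ satisfies the measure separation condition in K. Let C_φ and C_{γᵢ} denote the bounded composition operators f ↦ f∘φ and f ↦ f∘γᵢ on L²(K, μ^H), and for a ∈ C(K) let M_a be the multiplication operator. Then the C*-subalgebra of bounded operators on L²(K, μ^H) generated by {M_a : a ∈ C(K)} ∪ {C_φ} is contained in the C*-subalgebra generated by {M_a : a ∈ C(K)} ∪ {C_{γ₁}, …, C_{γₙ}}. -/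
open MeasureTheory Set Filter Topology
open scoped ENNReal NNReal

noncomputable section

/-- The C*-algebra `MC_φ` generated by the multiplication operators and the composition
operator `C_φ` is contained in the C*-algebra `MC_{γ₁,…,γₙ}` generated by the multiplication
operators and the composition operators `C_{γᵢ}`. -/
theorem MCphi_subset_MCgamma {K : Type*} [MetricSpace K] [CompactSpace K] [Nonempty K]
    [MeasurableSpace K] [BorelSpace K] {n : ℕ} (hn : 1 ≤ n)
    (γ : Fin n → K → K) (hγ : ∀ i, ProperContraction (γ i))
    (φ : K → K) (hφ : Continuous φ) (hbranch : ∀ (i : Fin n) (x : K), φ (γ i x) = x)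
    (hss : SelfSimilarSet γ) (hsep : MeasureSeparation γ)
    (μ : Measure K) (hμ : IsHutchinsonMeasure γ μ)
    (M : C(K, ℂ) → (Lp ℂ 2 μ →L[ℂ] Lp ℂ 2 μ))
    (hM : ∀ (a : C(K, ℂ)) (f : Lp ℂ 2 μ), (M a f : K → ℂ) =ᵐ[μ] fun x => a x * f x)
    (Cφ : Lp ℂ 2 μ →L[ℂ] Lp ℂ 2 μ)
    (hCφ : ∀ f : Lp ℂ 2 μ, (Cφ f : K → ℂ) =ᵐ[μ] fun x => f (φ x))
    (Cγ : Fin n → (Lp ℂ 2 μ →L[ℂ] Lp ℂ 2 μ))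
    (hCγ : ∀ (i : Fin n) (f : Lp ℂ 2 μ), (Cγ i f : K → ℂ) =ᵐ[μ] fun x => f (γ i x)) :
    (StarAlgebra.adjoin ℂ (Set.range M ∪ {Cφ})).topologicalClosure ≤
      (StarAlgebra.adjoin ℂ (Set.range M ∪ Set.range Cγ)).topologicalClosure := by
  haveI : IsProbabilityMeasure μ := hμ.1
  -- each γ i is Lipschitz, hence continuous and measurable
  have hγc : ∀ i, Continuous (γ i) := by
    intro i
    obtain ⟨c₁, c₂, hc₁, h12, hc₂, h⟩ := hγ i
    have hlip : LipschitzWith (Real.toNNReal c₂) (γ i) := by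
      apply LipschitzWith.of_dist_le_mul
      intro x y
      calc dist (γ i x) (γ i y) ≤ c₂ * dist x y := (h x y).2
        _ ≤ (Real.toNNReal c₂ : ℝ) * dist x y := by
            gcongr
            exact le_max_left _ _
    exact hlip.continuous
  -- the Hutchinson measure decomposes as an average of pushforwards
  have hmeas : μ = (n : ℝ≥0∞)⁻¹ • ∑ j, Measure.map (γ j) μ := by
    ext E hE
    rw [Measure.smul_apply, Measure.coe_finset_sum, Finset.sum_apply, hμ.2 E hE]
    congr 1
    refine Finset.sum_congr rfl fun j _ => ?_
    rw [Measure.map_apply (hγc j).measurable hE]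
  -- key operator identity : Cφ = (1/n) ∑ⱼ (Cγⱼ)*
  have key : Cφ = ((n : ℂ))⁻¹ • ∑ j, ContinuousLinearMap.adjoint (Cγ j) := by
    refine ContinuousLinearMap.ext fun f => ?_
    refine ext_inner_left ℂ fun g => ?_
    -- the common integrand
    set h : K → ℂ := fun x => (starRingEnd ℂ) ((g : K → ℂ) x) * (f : K → ℂ) (φ x) with hh
    have hsmh : StronglyMeasurable h := by
      exact ((Complex.continuous_conj.comp_stronglyMeasurable (Lp.stronglyMeasurable g))).mul
        ((Lp.stronglyMeasurable f).comp_measurable hφ.measurable)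
    have hint : ∀ j : Fin n, Integrable h (Measure.map (γ j) μ) := by
      intro j
      rw [integrable_map_measure hsmh.aestronglyMeasurable (hγc j).measurable.aemeasurable]
      have : (h ∘ γ j) = fun x => (starRingEnd ℂ) ((g : K → ℂ) (γ j x)) * (f : K → ℂ) x := by
        funext x
        simp [hh, Function.comp, hbranch j x]
      rw [this]
      have := L2.integrable_inner (𝕜 := ℂ) (Cγ j g) f
      simp only [RCLike.inner_apply] at this
      refine this.congr ?_
      filter_upwards [hCγ j g] with x hx
      rw [hx, mul_comm]
    -- compute both inner products
    have lhs : (inner ℂ g (Cφ f) : ℂ) = ∫ x, h x ∂μ := by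
      rw [L2.inner_def]
      refine integral_congr_ae ?_
      filter_upwards [hCφ f] with x hx
      rw [RCLike.inner_apply, hx]
      exact mul_comm _ _
    have rhs : ∀ j : Fin n, (inner ℂ (Cγ j g) f : ℂ) = ∫ x, h (γ j x) ∂μ := by
      intro j
      rw [L2.inner_def]
      refine integral_congr_ae ?_
      filter_upwards [hCγ j g] with x hx
      rw [RCLike.inner_apply, hx]
      simp [hh, hbranch j x, mul_comm]
    have decomp : ∫ x, h x ∂μ = ((n : ℝ))⁻¹ • ∑ j, ∫ x, h (γ j x) ∂μ := by
      conv_lhs => rw [hmeas]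
      rw [integral_smul_measure, integral_finset_sum_measure (fun j _ => hint j)]
      congr 1
      · simp
      · refine Finset.sum_congr rfl fun j _ => ?_
        exact integral_map (hγc j).measurable.aemeasurable hsmh.aestronglyMeasurable
    calc (inner ℂ g (Cφ f) : ℂ) = ((n : ℝ))⁻¹ • ∑ j, ∫ x, h (γ j x) ∂μ := by rw [lhs, decomp]
      _ = ((n : ℂ))⁻¹ * ∑ j, (inner ℂ (Cγ j g) f : ℂ) := by
          rw [Finset.sum_congr rfl fun j _ => (rhs j).symm]
          rw [Complex.real_smul]
          push_cast
          ring
      _ = inner ℂ g ((((n : ℂ))⁻¹ • ∑ j, ContinuousLinearMap.adjoint (Cγ j)) f) := by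
          rw [ContinuousLinearMap.smul_apply, ContinuousLinearMap.sum_apply,
            inner_smul_right, inner_sum]
          congr 1
          refine Finset.sum_congr rfl fun j _ => ?_
          rw [ContinuousLinearMap.adjoint_inner_right]
  -- Cφ belongs to the star algebra generated by the M's and the Cγ's
  set A := StarAlgebra.adjoin ℂ (Set.range M ∪ Set.range Cγ) with hA
  have hCγA : ∀ j, Cγ j ∈ A := fun j =>
    StarAlgebra.subset_adjoin ℂ _ (Or.inr ⟨j, rfl⟩)
  have hCφA : Cφ ∈ A := by
    rw [key]
    refine A.smul_mem (sum_mem fun j _ => ?_) _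
    rw [← ContinuousLinearMap.star_eq_adjoint]
    exact star_mem (hCγA j)
  refine StarSubalgebra.topologicalClosure_minimal ?_
    (StarSubalgebra.isClosed_topologicalClosure _)
  refine le_trans (StarAlgebra.adjoin_le ?_) (StarSubalgebra.le_topologicalClosure A)
  rintro T (hT | hT)
  · exact StarAlgebra.subset_adjoin ℂ _ (Or.inl hT)
  · rw [Set.mem_singleton_iff] at hT
    subst hT
    exact hCφA
end
end

section
/- Let (K, d) be a compact metric space, let γ = (γ₁, …, γₙ) be a system of proper contractions on K, and let φ: K → K be continuous with γ₁, …, γₙ as inverse branches. Assume that K is self-similar with respect to γ and that γ satisfies the measure separation condition in K. Let C_φ be the composition operator and M_b the multiplication operators on L²(K, μ^H). Then for any finitely many u₁, …, u_N ∈ C(K) and any a ∈ C(K), one has the identity in L²(K, μ^H): Σ_{i=1}^N M_{uᵢ} C_φ C_φ* M_{\overline{uᵢ}} a = Σ_{i=1}^N uᵢ · ((L_φ(\overline{uᵢ}·a))∘φ), where (L_φ f)(x) = (1/n)·Σ_{j=1}^n f(γⱼ(x)) and \overline{uᵢ} denotes the complex conjugate of uᵢ. -/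
open MeasureTheory Set Filter Topology
open scoped ENNReal NNReal

noncomputable section

/-- Key lemma: for `u₁, …, u_N, a ∈ C(K)`,
`∑ᵢ M_{uᵢ} C_φ C_φ* M_{\overline{uᵢ}} a = ∑ᵢ uᵢ ⋅ ((L_φ(\overline{uᵢ} a)) ∘ φ)` in `L²(K, μ^H)`. -/
theorem key_lemma {K : Type*} [MetricSpace K] [CompactSpace K] [Nonempty K]
    [MeasurableSpace K] [BorelSpace K] {n : ℕ} (hn : 1 ≤ n)
    (γ : Fin n → K → K) (hγ : ∀ i, ProperContraction (γ i))
    (φ : K → K) (hφ : Continuous φ) (hbranch : ∀ (i : Fin n) (x : K), φ (γ i x) = x)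
    (hss : SelfSimilarSet γ) (hsep : MeasureSeparation γ)
    (μ : Measure K) (hμ : IsHutchinsonMeasure γ μ)
    (Cφ : Lp ℂ 2 μ →L[ℂ] Lp ℂ 2 μ)
    (hCφ : ∀ f : Lp ℂ 2 μ, (Cφ f : K → ℂ) =ᵐ[μ] fun x => f (φ x))
    (M : C(K, ℂ) → (Lp ℂ 2 μ →L[ℂ] Lp ℂ 2 μ))
    (hM : ∀ (b : C(K, ℂ)) (f : Lp ℂ 2 μ), (M b f : K → ℂ) =ᵐ[μ] fun x => b x * f x)
    (N : ℕ) (u : Fin N → C(K, ℂ)) (a : C(K, ℂ))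
    (aL : Lp ℂ 2 μ) (haL : (aL : K → ℂ) =ᵐ[μ] a) :
    ((∑ i, M (u i) (Cφ ((ContinuousLinearMap.adjoint Cφ) (M (star (u i)) aL)))) : K → ℂ)
      =ᵐ[μ] fun x => ∑ i, u i x *
        ((n : ℂ)⁻¹ * ∑ j, (starRingEnd ℂ) (u i (γ j (φ x))) * a (γ j (φ x))) := by
  classical
  haveI : IsProbabilityMeasure μ := hμ.1
  have hn0 : (n : ℝ≥0∞) ≠ 0 := by
    simp only [ne_eq, Nat.cast_eq_zero]; omega
  have hntop : (n : ℝ≥0∞) ≠ ⊤ := ENNReal.natCast_ne_top n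
  -- continuity and measurability of the branches
  have hγc : ∀ i, Continuous (γ i) := by
    intro i
    obtain ⟨c₁, c₂, hc₁, hc₁₂, hc₂, hd⟩ := hγ i
    exact (LipschitzWith.of_dist_le_mul (K := c₂.toNNReal) (fun x y => by
      refine (hd x y).2.trans (mul_le_mul_of_nonneg_right ?_ dist_nonneg)
      exact Real.le_coe_toNNReal c₂)).continuous
  have hγm : ∀ i, Measurable (γ i) := fun i => (hγc i).measurable
  have hφm : Measurable φ := hφ.measurable
  -- decomposition of μ
  have hmap : ∀ j, μ.map (γ j) ≤ (n : ℝ≥0∞) • μ := by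
    intro j
    refine Measure.le_iff.2 fun E hE => ?_
    rw [Measure.map_apply (hγm j) hE, Measure.smul_apply, smul_eq_mul, hμ.2 E hE,
      ← mul_assoc, ENNReal.mul_inv_cancel hn0 hntop, one_mul]
    exact Finset.single_le_sum (f := fun i => μ (γ i ⁻¹' E)) (fun _ _ => zero_le)
      (Finset.mem_univ j)
  have hdecomp : μ = (n : ℝ≥0∞)⁻¹ • ∑ j, μ.map (γ j) := by
    ext E hE
    rw [Measure.smul_apply, Measure.finset_sum_apply, smul_eq_mul, hμ.2 E hE]
    congr 1
    exact Finset.sum_congr rfl fun j _ => (Measure.map_apply (hγm j) hE).symm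
  -- change of variables
  have hCOV : ∀ G : K → ℂ, StronglyMeasurable G → Integrable G μ →
      ∫ x, G x ∂μ = (n : ℝ)⁻¹ • ∑ j, ∫ x, G (γ j x) ∂μ := by
    intro G hGm hGi
    have hIm : ∀ j : Fin n, Integrable G (μ.map (γ j)) := fun j =>
      (hGi.smul_measure hntop).mono_measure (hmap j)
    calc ∫ x, G x ∂μ = ∫ x, G x ∂((n : ℝ≥0∞)⁻¹ • ∑ j, μ.map (γ j)) := by rw [← hdecomp]
      _ = ((n : ℝ≥0∞)⁻¹).toReal • ∫ x, G x ∂(∑ j, μ.map (γ j)) := integral_smul_measure _ _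
      _ = (n : ℝ)⁻¹ • ∑ j, ∫ x, G x ∂(μ.map (γ j)) := by
          rw [integral_finset_sum_measure fun j _ => hIm j]
          congr 1
          simp [ENNReal.toReal_inv]
      _ = (n : ℝ)⁻¹ • ∑ j, ∫ x, G (γ j x) ∂μ := by
          congr 1
          exact Finset.sum_congr rfl fun j _ =>
            integral_map (hγm j).aemeasurable hGm.aestronglyMeasurable
  -- φ is measure preserving
  have hφpres : MeasurePreserving φ μ μ := by
    refine ⟨hφm, ?_⟩
    ext E hE
    have hpre : ∀ j : Fin n, γ j ⁻¹' (φ ⁻¹' E) = E := by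
      intro j; ext x; simp [hbranch j x]
    rw [Measure.map_apply hφm hE, hμ.2 _ (hφm hE)]
    simp only [hpre, Finset.sum_const, Finset.card_univ, Fintype.card_fin, nsmul_eq_mul]
    rw [← mul_assoc, ENNReal.inv_mul_cancel hn0 hntop, one_mul]
  have hφq := hφpres.quasiMeasurePreserving
  -- the continuous functions
  set F : Fin N → C(K, ℂ) := fun i => star (u i) * a with hF
  set w : Fin N → C(K, ℂ) := fun i =>
    (n : ℂ)⁻¹ • ∑ j, (F i).comp ⟨γ j, hγc j⟩ with hw
  have hwsum : ∀ i x, w i x = (n : ℂ)⁻¹ * ∑ j, F i (γ j x) := by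
    intro i x
    simp only [hw, ContinuousMap.smul_apply, ContinuousMap.coe_sum, Finset.sum_apply,
      ContinuousMap.comp_apply, ContinuousMap.coe_mk, smul_eq_mul]
  have hwval : ∀ i x, w i x = (n : ℂ)⁻¹ * ∑ j, (starRingEnd ℂ) (u i (γ j x)) * a (γ j x) := by
    intro i x
    rw [hwsum i x]
    simp only [hF, ContinuousMap.mul_apply, ContinuousMap.star_apply, RCLike.star_def]
  -- step 1 : M (star u i) aL = toLp (F i)
  have step1 : ∀ i, M (star (u i)) aL = ContinuousMap.toLp (2 : ℝ≥0∞) μ ℂ (F i) := by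
    intro i
    apply Lp.ext
    filter_upwards [hM (star (u i)) aL, haL, ContinuousMap.coeFn_toLp (p := (2 : ℝ≥0∞)) μ (𝕜 := ℂ) (F i)]
      with x h1 h2 h3
    rw [h1, h2, h3]
    simp [hF]
  -- step 2 : adjoint Cφ (toLp (F i)) = toLp (w i)
  have step2 : ∀ i, (ContinuousLinearMap.adjoint Cφ) (ContinuousMap.toLp (2 : ℝ≥0∞) μ ℂ (F i))
      = ContinuousMap.toLp (2 : ℝ≥0∞) μ ℂ (w i) := by
    intro i
    apply ext_inner_left ℂ
    intro v
    rw [ContinuousLinearMap.adjoint_inner_right, L2.inner_def, L2.inner_def]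
    have hInt : ∀ j : Fin n, Integrable
        (fun x => (starRingEnd ℂ) (v x) * F i (γ j x)) μ := by
      intro j
      refine (L2.integrable_inner (𝕜 := ℂ) v
        (ContinuousMap.toLp (2 : ℝ≥0∞) μ ℂ ((F i).comp ⟨γ j, hγc j⟩))).congr ?_
      filter_upwards [ContinuousMap.coeFn_toLp (p := (2 : ℝ≥0∞)) μ (𝕜 := ℂ) ((F i).comp ⟨γ j, hγc j⟩)] with x h
      rw [RCLike.inner_apply, h]
      exact mul_comm _ _
    have lhs_eq : ∫ x, (inner ℂ ((Cφ v) x) ((ContinuousMap.toLp (2 : ℝ≥0∞) μ ℂ (F i)) x) : ℂ) ∂μ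
        = (n : ℝ)⁻¹ • ∑ j, ∫ x, (starRingEnd ℂ) (v x) * F i (γ j x) ∂μ := by
      have hG : ∫ x, (inner ℂ ((Cφ v) x) ((ContinuousMap.toLp (2 : ℝ≥0∞) μ ℂ (F i)) x) : ℂ) ∂μ
          = ∫ x, (starRingEnd ℂ) (v (φ x)) * F i x ∂μ := by
        refine integral_congr_ae ?_
        filter_upwards [hCφ v, ContinuousMap.coeFn_toLp (p := (2 : ℝ≥0∞)) μ (𝕜 := ℂ) (F i)] with x h1 h2
        rw [RCLike.inner_apply, h1, h2, mul_comm]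
      rw [hG]
      have hsm : StronglyMeasurable (fun x => (starRingEnd ℂ) (v (φ x)) * F i x) := by
        have h1 : StronglyMeasurable (fun x => v (φ x)) :=
          (Lp.stronglyMeasurable v).comp_measurable hφm
        exact ((RCLike.continuous_conj.comp_stronglyMeasurable h1)).mul
          (F i).continuous.stronglyMeasurable
      have hint : Integrable (fun x => (starRingEnd ℂ) (v (φ x)) * F i x) μ := by
        refine (L2.integrable_inner (𝕜 := ℂ) (Cφ v) (ContinuousMap.toLp (2 : ℝ≥0∞) μ ℂ (F i))).congr ?_
        filter_upwards [hCφ v, ContinuousMap.coeFn_toLp (p := (2 : ℝ≥0∞)) μ (𝕜 := ℂ) (F i)] with x h1 h2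
        rw [RCLike.inner_apply, h1, h2, mul_comm]
      rw [hCOV _ hsm hint]
      congr 1
      refine Finset.sum_congr rfl fun j _ => ?_
      simp only [hbranch]
    have rhs_eq : ∫ x, (inner ℂ (v x) ((ContinuousMap.toLp (2 : ℝ≥0∞) μ ℂ (w i)) x) : ℂ) ∂μ
        = (n : ℝ)⁻¹ • ∑ j, ∫ x, (starRingEnd ℂ) (v x) * F i (γ j x) ∂μ := by
      have hG : ∫ x, (inner ℂ (v x) ((ContinuousMap.toLp (2 : ℝ≥0∞) μ ℂ (w i)) x) : ℂ) ∂μ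
          = ∫ x, (n : ℂ)⁻¹ • ∑ j, (starRingEnd ℂ) (v x) * F i (γ j x) ∂μ := by
        refine integral_congr_ae ?_
        filter_upwards [ContinuousMap.coeFn_toLp (p := (2 : ℝ≥0∞)) μ (𝕜 := ℂ) (w i)] with x h1
        rw [RCLike.inner_apply, h1, hwsum i x, mul_comm, mul_left_comm, Finset.mul_sum, smul_eq_mul,
          Finset.mul_sum]
      rw [hG, integral_smul, integral_finset_sum _ fun j _ => hInt j, smul_eq_mul,
        Complex.real_smul]
      push_cast
      ring
    rw [lhs_eq, rhs_eq]
  -- step 3: a.e. identification of each summand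
  have step3 : ∀ i, (Cφ ((ContinuousLinearMap.adjoint Cφ) (M (star (u i)) aL)) : K → ℂ)
      =ᵐ[μ] fun x => w i (φ x) := by
    intro i
    rw [step1 i, step2 i]
    refine (hCφ _).trans ?_
    exact hφq.ae_eq_comp (ContinuousMap.coeFn_toLp (p := (2 : ℝ≥0∞)) μ (𝕜 := ℂ) (w i))
  -- conclude
  have hae : ∀ᵐ x ∂μ, ∀ i : Fin N,
      (M (u i) (Cφ ((ContinuousLinearMap.adjoint Cφ) (M (star (u i)) aL))) : K → ℂ) x
        = u i x * ((Cφ ((ContinuousLinearMap.adjoint Cφ) (M (star (u i)) aL)) : K → ℂ) x) :=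
    ae_all_iff.mpr fun i => hM (u i) _
  have hae2 : ∀ᵐ x ∂μ, ∀ i : Fin N,
      (Cφ ((ContinuousLinearMap.adjoint Cφ) (M (star (u i)) aL)) : K → ℂ) x = w i (φ x) :=
    ae_all_iff.mpr fun i => step3 i
  filter_upwards [hae, hae2] with x h1 h2
  simp only [Finset.sum_apply]
  refine Finset.sum_congr rfl fun i _ => ?_
  rw [h1 i, h2 i, hwval i (φ x)]
end
end

section
/- Let (K, d) be a compact metric space, let γ = (γ₁, …, γₙ) be a system of proper contractions on K, and let φ: K → K be continuous with γ₁, …, γₙ as inverse branches. Assume that K is self-similar with respect to γ and that γ satisfies the measure separation condition in K. Let {uᵢ}_{i=1}^∞ ⊆ C(K) be a countable basis, i.e., for every ξ ∈ C(K) the partial sums Σ_{i=1}^N uᵢ·((L_φ(\overline{uᵢ}·ξ))∘φ) converge to ξ as N → ∞ in the norm ‖η‖₂ := ‖L_φ(|η|²)‖_∞^{1/2}. Then for every N, the operator T_N = Σ_{i=1}^N M_{uᵢ} C_φ C_φ* M_{\overline{uᵢ}} on L²(K, μ^H) satisfies 0 ≤ T_N ≤ I, i.e., T_N is a positive operator and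 I − T_N is a positive operator. -/
open MeasureTheory Set Filter Topology
open scoped ENNReal NNReal

noncomputable section

/-- The transfer operator on continuous functions: `(L h)(x) = n⁻¹ ∑ₖ h (γ k x)`. -/
def transferCM {K : Type*} [MetricSpace K] {n : ℕ} (γ : Fin n → K → K)
    (hγc : ∀ i, Continuous (γ i)) (h : C(K, ℂ)) : C(K, ℂ) :=
  ⟨fun x => (n : ℂ)⁻¹ * ∑ k, h (γ k x),
    continuous_const.mul (continuous_finset_sum _ fun k _ => h.continuous.comp (hγc k))⟩

@[simp] lemma transferCM_apply {K : Type*} [MetricSpace K] {n : ℕ} (γ : Fin n → K → K)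
    (hγc : ∀ i, Continuous (γ i)) (h : C(K, ℂ)) (x : K) :
    transferCM γ hγc h x = (n : ℂ)⁻¹ * ∑ k, h (γ k x) := rfl

set_option maxHeartbeats 1000000 in
/-- If `{uᵢ}` is a countable basis of the Hilbert bimodule `X = C(K)` (i.e. the partial sums
`∑_{i<N} uᵢ ⋅ ((L_φ(\overline{uᵢ} ξ)) ∘ φ)` converge to `ξ` in the norm
`‖η‖₂ = ‖L_φ(|η|²)‖_∞^{1/2}`), then for every `N` the operator
`T_N = ∑_{i<N} M_{uᵢ} C_φ C_φ* M_{\overline{uᵢ}}` satisfies `0 ≤ T_N ≤ I`. -/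
theorem TN_positive_and_le_one {K : Type*} [MetricSpace K] [CompactSpace K] [Nonempty K]
    [MeasurableSpace K] [BorelSpace K] {n : ℕ} (hn : 1 ≤ n)
    (γ : Fin n → K → K) (hγ : ∀ i, ProperContraction (γ i))
    (φ : K → K) (hφ : Continuous φ) (hbranch : ∀ (i : Fin n) (x : K), φ (γ i x) = x)
    (hss : SelfSimilarSet γ) (hsep : MeasureSeparation γ)
    (μ : Measure K) (hμ : IsHutchinsonMeasure γ μ)
    (Cφ : Lp ℂ 2 μ →L[ℂ] Lp ℂ 2 μ)
    (hCφ : ∀ f : Lp ℂ 2 μ, (Cφ f : K → ℂ) =ᵐ[μ] fun x => f (φ x))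
    (M : C(K, ℂ) → (Lp ℂ 2 μ →L[ℂ] Lp ℂ 2 μ))
    (hM : ∀ (b : C(K, ℂ)) (f : Lp ℂ 2 μ), (M b f : K → ℂ) =ᵐ[μ] fun x => b x * f x)
    (u : ℕ → C(K, ℂ))
    (hbasis : ∀ ξ : C(K, ℂ),
      Tendsto (fun N : ℕ => Real.sqrt (⨆ x : K, (n : ℝ)⁻¹ * ∑ j,
          ‖(∑ i ∈ Finset.range N, u i (γ j x) *
              ((n : ℂ)⁻¹ * ∑ k, (starRingEnd ℂ) (u i (γ k (φ (γ j x)))) *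
                ξ (γ k (φ (γ j x))))) - ξ (γ j x)‖ ^ 2))
        atTop (nhds 0))
    (N : ℕ) :
    (∑ i ∈ Finset.range N,
        (M (u i)).comp (Cφ.comp ((ContinuousLinearMap.adjoint Cφ).comp
          (M (star (u i)))))).IsPositive ∧
      (1 - ∑ i ∈ Finset.range N,
        (M (u i)).comp (Cφ.comp ((ContinuousLinearMap.adjoint Cφ).comp
          (M (star (u i)))))).IsPositive := by
  classical
  haveI hprob : IsProbabilityMeasure μ := hμ.1
  have hn0 : (n : ℝ≥0∞) ≠ 0 := Nat.cast_ne_zero.mpr (by omega)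
  -- continuity and measurability of the branches
  have hγc : ∀ i, Continuous (γ i) := by
    intro i
    obtain ⟨c₁, c₂, hc₁, h12, hc₂, h⟩ := hγ i
    refine (LipschitzWith.of_dist_le_mul (K := c₂.toNNReal) fun x y => ?_).continuous
    exact (h x y).2.trans (mul_le_mul_of_nonneg_right (Real.le_coe_toNNReal c₂) dist_nonneg)
  have hγm : ∀ i, Measurable (γ i) := fun i => (hγc i).measurable
  -- the self-similarity identity as an identity of measures
  have hmeasid : μ = (n : ℝ≥0∞)⁻¹ • ∑ j, Measure.map (γ j) μ := by
    ext E hE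
    rw [Measure.smul_apply, Measure.finset_sum_apply, hμ.2 E hE, smul_eq_mul]
    congr 1
    exact Finset.sum_congr rfl fun j _ => (Measure.map_apply (hγm j) hE).symm
  have hfin : ∀ j : Fin n, IsFiniteMeasure (Measure.map (γ j) μ) :=
    fun j => Measure.isFiniteMeasure_map μ (γ j)
  -- integrability of continuous functions
  have hIcont : ∀ (E : Type) [NormedAddCommGroup E] (F : K → E), Continuous F →
      Integrable F μ := by
    intro E _ F hF
    exact hF.integrable_of_hasCompactSupport (HasCompactSupport.of_compactSpace F)
  -- the basic integral identity
  have hint : ∀ (E : Type) [NormedAddCommGroup E] [NormedSpace ℝ E] (F : K → E),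
      Continuous F → ∫ x, F x ∂μ = (n : ℝ)⁻¹ • ∑ j, ∫ x, F (γ j x) ∂μ := by
    intro E _ _ F hF
    have hInt : ∀ j : Fin n, Integrable F (Measure.map (γ j) μ) := by
      intro j
      haveI := hfin j
      exact hF.integrable_of_hasCompactSupport (HasCompactSupport.of_compactSpace F)
    calc ∫ x, F x ∂μ = ∫ x, F x ∂((n : ℝ≥0∞)⁻¹ • ∑ j, Measure.map (γ j) μ) := by
          rw [← hmeasid]
      _ = ((n : ℝ≥0∞)⁻¹).toReal • ∫ x, F x ∂(∑ j, Measure.map (γ j) μ) :=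
          integral_smul_measure _ _
      _ = (n : ℝ)⁻¹ • ∑ j, ∫ x, F x ∂(Measure.map (γ j) μ) := by
          rw [integral_finset_sum_measure (fun j _ => hInt j)]
          congr 1
          simp [ENNReal.toReal_inv]
      _ = (n : ℝ)⁻¹ • ∑ j, ∫ x, F (γ j x) ∂μ := by
          congr 1
          exact Finset.sum_congr rfl fun j _ =>
            integral_map (hγm j).aemeasurable hF.aestronglyMeasurable
  -- φ preserves μ
  have hφm : Measurable φ := hφ.measurable
  have hpre : ∀ (j : Fin n) (E : Set K), γ j ⁻¹' (φ ⁻¹' E) = E := by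
    intro j E; ext x; simp [hbranch j x]
  have hφmp : MeasurePreserving φ μ μ := by
    refine ⟨hφm, ?_⟩
    ext E hE
    rw [Measure.map_apply hφm hE, hμ.2 _ (hφm hE)]
    simp only [hpre]
    rw [Finset.sum_const, Finset.card_univ, Fintype.card_fin, nsmul_eq_mul, ← mul_assoc,
      ENNReal.inv_mul_cancel hn0 (ENNReal.natCast_ne_top n), one_mul]
  have hcompae : ∀ {f g : K → ℂ}, f =ᵐ[μ] g → (fun x => f (φ x)) =ᵐ[μ] fun x => g (φ x) :=
    fun h => hφmp.quasiMeasurePreserving.ae_eq_comp h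
  -- embedding of continuous functions into L²
  set tl : C(K, ℂ) →L[ℂ] Lp ℂ 2 μ := ContinuousMap.toLp 2 μ ℂ with htl_def
  have htl : ∀ f : C(K, ℂ), (tl f : K → ℂ) =ᵐ[μ] f :=
    fun f => ContinuousMap.coeFn_toLp (p := 2) μ f
  have hd : DenseRange tl :=
    ContinuousMap.toLp_denseRange (E := ℂ) (μ := μ) (𝕜 := ℂ) (by norm_num)
  have hinner : ∀ f g : Lp ℂ 2 μ,
      (inner ℂ f g : ℂ) = ∫ x, (starRingEnd ℂ) (f x) * g x ∂μ := by
    intro f g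
    rw [MeasureTheory.L2.inner_def]
    simp [RCLike.inner_apply]
    exact integral_congr_ae (Eventually.of_forall fun x => mul_comm _ _)
  -- adjoint of multiplication operators
  have hMadj : ∀ b : C(K, ℂ), M (star b) = ContinuousLinearMap.adjoint (M b) := by
    intro b
    rw [ContinuousLinearMap.eq_adjoint_iff]
    intro f g
    rw [hinner, hinner]
    refine integral_congr_ae ?_
    filter_upwards [hM (star b) f, hM b g] with x h1 h2
    rw [h1, h2]
    simp only [ContinuousMap.star_apply, map_mul, starRingEnd_apply, star_star]
    ring
  -- the summands are positive
  set T : ℕ → (Lp ℂ 2 μ →L[ℂ] Lp ℂ 2 μ) := fun i =>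
    (M (u i)).comp (Cφ.comp ((ContinuousLinearMap.adjoint Cφ).comp (M (star (u i))))) with hT_def
  have hterm_eq : ∀ i, T i =
      ((M (u i)).comp Cφ) ∘L (ContinuousLinearMap.adjoint ((M (u i)).comp Cφ)) := by
    intro i
    rw [ContinuousLinearMap.adjoint_comp, ← hMadj]
    rfl
  have hTpos : ∀ i, (T i).IsPositive := by
    intro i
    have h := (ContinuousLinearMap.isPositive_one (E := Lp ℂ 2 μ)).conj_adjoint
      ((M (u i)).comp Cφ)
    rw [hterm_eq i]
    simpa [ContinuousLinearMap.one_def] using h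
  have hTNpos : ∀ N' : ℕ, (∑ i ∈ Finset.range N', T i).IsPositive := by
    intro N'
    exact Finset.sum_induction T _ (fun a b ha hb => ha.add hb)
      ContinuousLinearMap.isPositive_zero (fun i _ => hTpos i)
  -- adjoint of Cφ on continuous functions is the transfer operator
  have hCadj : ∀ h : C(K, ℂ),
      (ContinuousLinearMap.adjoint Cφ) (tl h) = tl (transferCM γ hγc h) := by
    intro h
    refine ext_inner_right ℂ fun v => ?_
    rw [ContinuousLinearMap.adjoint_inner_left]
    have hcl : IsClosed {v : Lp ℂ 2 μ |
        (inner ℂ (tl h) (Cφ v) : ℂ) = inner ℂ (tl (transferCM γ hγc h)) v} :=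
      isClosed_eq (Continuous.inner continuous_const Cφ.continuous)
        (Continuous.inner continuous_const continuous_id)
    refine hd.induction_on v hcl fun G => ?_
    rw [hinner, hinner]
    have e1 : (fun x => (starRingEnd ℂ) ((tl h) x) * (Cφ (tl G)) x)
        =ᵐ[μ] fun x => (starRingEnd ℂ) (h x) * G (φ x) := by
      filter_upwards [htl h, hCφ (tl G), hcompae (htl G)] with x h1 h2 h3
      rw [h1, h2, h3]
    have e2 : (fun x => (starRingEnd ℂ) ((tl (transferCM γ hγc h)) x) * (tl G) x)
        =ᵐ[μ] fun x => (starRingEnd ℂ) ((transferCM γ hγc h) x) * G x := by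
      filter_upwards [htl (transferCM γ hγc h), htl G] with x h1 h2
      rw [h1, h2]
    rw [integral_congr_ae e1, integral_congr_ae e2]
    rw [hint ℂ (fun x => (starRingEnd ℂ) (h x) * G (φ x))
      ((Complex.continuous_conj.comp h.continuous).mul (G.continuous.comp hφ))]
    have e3 : ∀ j : Fin n, (∫ x, (starRingEnd ℂ) (h (γ j x)) * G (φ (γ j x)) ∂μ)
        = ∫ x, (starRingEnd ℂ) (h (γ j x)) * G x ∂μ := by
      intro j
      congr 1
      funext x
      rw [hbranch j x]
    calc (n : ℝ)⁻¹ • ∑ j, ∫ x, (starRingEnd ℂ) (h (γ j x)) * G (φ (γ j x)) ∂μ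
        = (n : ℝ)⁻¹ • ∑ j, ∫ x, (starRingEnd ℂ) (h (γ j x)) * G x ∂μ := by
          rw [Finset.sum_congr rfl fun j _ => e3 j]
      _ = (n : ℝ)⁻¹ • ∫ x, ∑ j, (starRingEnd ℂ) (h (γ j x)) * G x ∂μ :=
          congrArg (fun z => (n : ℝ)⁻¹ • z)
            (integral_finset_sum (f := fun (j : Fin n) x => (starRingEnd ℂ) (h (γ j x)) * G x)
              Finset.univ (fun j _ => hIcont ℂ _
                ((Complex.continuous_conj.comp (h.continuous.comp (hγc j))).mul
                  G.continuous))).symm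
      _ = ∫ x, (n : ℝ)⁻¹ • ∑ j, (starRingEnd ℂ) (h (γ j x)) * G x ∂μ :=
          (integral_smul _ _).symm
      _ = ∫ a, (starRingEnd ℂ) ((transferCM γ hγc h) a) * G a ∂μ := by
          refine integral_congr_ae (Eventually.of_forall fun x => ?_)
          simp only [transferCM_apply, map_mul, map_sum, map_inv₀, Complex.conj_natCast]
          rw [Complex.real_smul, ← Finset.sum_mul, mul_assoc]
          push_cast
          ring
  -- images of continuous functions under the building blocks
  have hMtl : ∀ (b g : C(K, ℂ)), M b (tl g) = tl (b * g) := by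
    intro b g
    apply Lp.ext
    filter_upwards [hM b (tl g), htl g, htl (b * g)] with x h1 h2 h3
    rw [h1, h2, h3, ContinuousMap.mul_apply]
  have hCtl : ∀ g : C(K, ℂ), Cφ (tl g) = tl (g.comp ⟨φ, hφ⟩) := by
    intro g
    apply Lp.ext
    filter_upwards [hCφ (tl g), hcompae (htl g), htl (g.comp ⟨φ, hφ⟩)] with x h1 h2 h3
    rw [h1, h2, h3]
    rfl
  have htermtl : ∀ (i : ℕ) (G : C(K, ℂ)), T i (tl G) =
      tl (u i * ((transferCM γ hγc (star (u i) * G)).comp ⟨φ, hφ⟩)) := by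
    intro i G
    show M (u i) (Cφ ((ContinuousLinearMap.adjoint Cφ) (M (star (u i)) (tl G)))) = _
    rw [hMtl, hCadj, hCtl, hMtl]
  have hTNtl : ∀ (N' : ℕ) (G : C(K, ℂ)), (∑ i ∈ Finset.range N', T i) (tl G) =
      tl (∑ i ∈ Finset.range N',
        u i * ((transferCM γ hγc (star (u i) * G)).comp ⟨φ, hφ⟩)) := by
    intro N' G
    rw [ContinuousLinearMap.sum_apply, map_sum]
    exact Finset.sum_congr rfl fun i _ => htermtl i G
  -- norm bound in terms of the module norm
  have hnormtl : ∀ η : C(K, ℂ),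
      ‖tl η‖ ^ 2 ≤ ⨆ x : K, (n : ℝ)⁻¹ * ∑ j, ‖η (γ j x)‖ ^ 2 := by
    intro η
    have h1 : ‖tl η‖ ^ 2 = ∫ x, ‖η x‖ ^ 2 ∂μ := by
      rw [← inner_self_eq_norm_sq (𝕜 := ℂ) (tl η), hinner]
      have e : (fun x => (starRingEnd ℂ) ((tl η) x) * (tl η) x)
          =ᵐ[μ] fun x => ((‖η x‖ ^ 2 : ℝ) : ℂ) := by
        filter_upwards [htl η] with x hx
        rw [hx, ← Complex.normSq_eq_conj_mul_self, Complex.normSq_eq_norm_sq]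
        try push_cast
        try ring
      rw [integral_congr_ae e,
        show (fun a => ((‖η a‖ ^ 2 : ℝ) : ℂ)) = fun a => RCLike.ofReal (K := ℂ) (‖η a‖ ^ 2)
          from rfl,
        integral_ofReal]
      exact RCLike.ofReal_re _
    rw [h1, hint ℝ (fun x => ‖η x‖ ^ 2) (by fun_prop)]
    have hc2 : Continuous fun x : K => (n : ℝ)⁻¹ * ∑ j, ‖η (γ j x)‖ ^ 2 := by fun_prop
    have hbdd : BddAbove (Set.range fun x : K => (n : ℝ)⁻¹ * ∑ j, ‖η (γ j x)‖ ^ 2) := by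
      rw [← Set.image_univ]
      exact (isCompact_univ.image hc2).bddAbove
    rw [← integral_finset_sum _ (fun j _ => hIcont ℝ _ (by fun_prop)), ← integral_smul]
    calc ∫ x, (n : ℝ)⁻¹ • ∑ j, ‖η (γ j x)‖ ^ 2 ∂μ
        ≤ ∫ _, (⨆ y : K, (n : ℝ)⁻¹ * ∑ j, ‖η (γ j y)‖ ^ 2) ∂μ := by
          refine integral_mono (hIcont ℝ _ (by fun_prop)) (integrable_const _) fun x => ?_
          simpa [smul_eq_mul] using le_ciSup hbdd x
      _ = ⨆ y : K, (n : ℝ)⁻¹ * ∑ j, ‖η (γ j y)‖ ^ 2 := by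
          simp [integral_const]
  -- convergence of T_N (tl G) to tl G for continuous G
  have hGlim : ∀ G : C(K, ℂ),
      Tendsto (fun N' : ℕ => (∑ i ∈ Finset.range N', T i) (tl G)) atTop (𝓝 (tl G)) := by
    intro G
    rw [tendsto_iff_norm_sub_tendsto_zero]
    refine squeeze_zero (fun _ => norm_nonneg _) (fun N' => ?_) (hbasis G)
    rw [hTNtl N' G, ← map_sub]
    refine Real.le_sqrt_of_sq_le ?_
    refine le_trans (hnormtl _) (le_of_eq ?_)
    refine iSup_congr fun x => ?_
    congr 1
    refine Finset.sum_congr rfl fun j _ => ?_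
    congr 2
    simp only [ContinuousMap.sub_apply, ContinuousMap.sum_apply, ContinuousMap.mul_apply,
      ContinuousMap.comp_apply, ContinuousMap.coe_mk, transferCM_apply,
      ContinuousMap.star_apply, starRingEnd_apply]
  -- the quadratic form of T_N is dominated by the norm on continuous functions
  have hquad : ∀ (G : C(K, ℂ)),
      RCLike.re (inner ℂ ((∑ i ∈ Finset.range N, T i) (tl G)) (tl G) : ℂ)
        ≤ RCLike.re (inner ℂ (tl G) (tl G) : ℂ) := by
    intro G
    set a : ℕ → ℝ := fun N' =>
      RCLike.re (inner ℂ ((∑ i ∈ Finset.range N', T i) (tl G)) (tl G) : ℂ) with ha_def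
    have hmono : Monotone a := by
      refine monotone_nat_of_le_succ fun N' => ?_
      have : a (N' + 1) = a N' + RCLike.re (inner ℂ (T N' (tl G)) (tl G) : ℂ) := by
        simp only [ha_def, Finset.sum_range_succ, ContinuousLinearMap.add_apply,
          inner_add_left, map_add]
      rw [this]
      have := (hTpos N').re_inner_nonneg_left (tl G)
      linarith
    have hlim : Tendsto a atTop (𝓝 (RCLike.re (inner ℂ (tl G) (tl G) : ℂ))) := by
      have h1 : Tendsto (fun N' : ℕ =>
          (inner ℂ ((∑ i ∈ Finset.range N', T i) (tl G)) (tl G) : ℂ)) atTop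
          (𝓝 (inner ℂ (tl G) (tl G))) :=
        (hGlim G).inner tendsto_const_nhds
      exact (RCLike.continuous_re.tendsto _).comp h1
    exact hmono.ge_of_tendsto hlim N
  -- conclude
  refine ⟨hTNpos N, ?_⟩
  constructor
  · exact ContinuousLinearMap.isSelfAdjoint_iff_isSymmetric.mp
      ((ContinuousLinearMap.isPositive_one (E := Lp ℂ 2 μ)).isSelfAdjoint.sub
      (hTNpos N).isSelfAdjoint)
  · intro f
    rw [ContinuousLinearMap.reApplyInnerSelf_apply]
    have hcl : IsClosed {f : Lp ℂ 2 μ |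
        0 ≤ RCLike.re ((inner ℂ ((1 - ∑ i ∈ Finset.range N, T i) f) f : ℂ))} := by
      refine isClosed_le continuous_const ?_
      exact RCLike.continuous_re.comp
        ((Continuous.inner ((1 - ∑ i ∈ Finset.range N, T i).continuous) continuous_id))
    have hmem : ∀ G : C(K, ℂ), 0 ≤
        RCLike.re ((inner ℂ ((1 - ∑ i ∈ Finset.range N, T i) (tl G)) (tl G) : ℂ)) := by
      intro G
      rw [ContinuousLinearMap.sub_apply, inner_sub_left, map_sub,
        ContinuousLinearMap.one_apply]
      have := hquad G
      linarith
    exact hd.induction_on f hcl hmem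
end
end
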